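/- Let s ∈ (0, 1/2), let m be a positive integer, and let {f_α : α ∈ J} be a family of complex-valued functions on the closed upper half-plane {w ∈ ℂ : Im w ≥ 0} that is uniformly bounded and uniformly equicontinuous. Then sup over α ∈ J, κ ≥ 0 and E ∈ ℝ of the supremum norm of (T_{κ,E+iε,s}^m − T_{κ,E,s}^m) f_α tends to 0 as ε ↓ 0. -/

import Mathlib

open MeasureTheory Complex

/-- `φ⁺_{z,q}(w) = ½(−1/(w+(z−q₀)/√2) + (−1/(w+(z−q₁)/√2)))`; terms with vanishing
denominator are zero (automatic, since division by zero is zero). -/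
noncomputable def phiPlus (z : ℂ) (q : ℝ × ℝ) (w : ℂ) : ℂ :=
  (1 / 2) * (-1 / (w + (z - (q.1 : ℂ)) / (Real.sqrt 2 : ℂ))
    + -1 / (w + (z - (q.2 : ℂ)) / (Real.sqrt 2 : ℂ)))

/-- `φ⁻_{z,q}(w) = ½(−1/(w+(z−q₀)/√2) − (−1/(w+(z−q₁)/√2)))`. -/
noncomputable def phiMinus (z : ℂ) (q : ℝ × ℝ) (w : ℂ) : ℂ :=
  (1 / 2) * (-1 / (w + (z - (q.1 : ℂ)) / (Real.sqrt 2 : ℂ))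
    - -1 / (w + (z - (q.2 : ℂ)) / (Real.sqrt 2 : ℂ)))

/-- The transfer operator `T_{κ,z,s}` acting on bounded Borel functions on the closed upper
half-plane. -/
noncomputable def transferOpC (ν : ℝ → ℝ) (σ : Measure (ℝ × ℝ)) (κ : ℝ) (z : ℂ) (s : ℝ)
    (f : ℂ → ℂ) (w : ℂ) : ℂ :=
  ∫ p : ℝ × ℝ, (∫ r : ℝ, f (phiPlus z (r + κ * p.1, r + κ * p.2) w) *
    ((((norm (phiPlus z (r + κ * p.1, r + κ * p.2) w)) ^ s
      + (norm (phiMinus z (r + κ * p.1, r + κ * p.2) w)) ^ s) * ν r : ℝ) : ℂ)) ∂σ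

noncomputable def Complex.abs : AbsoluteValue ℂ ℝ where
  toFun := fun z => ‖z‖
  map_mul' := norm_mul
  nonneg' := norm_nonneg
  eq_zero' _ := norm_eq_zero
  add_le' := norm_add_le

theorem Complex.norm_eq_abs (z : ℂ) : ‖z‖ = Complex.abs z := rfl

@[simp] theorem Complex.abs_ofReal (r : ℝ) : Complex.abs (r : ℂ) = |r| :=
  (Complex.norm_real r).trans (Real.norm_eq_abs r)

theorem Complex.abs_re_le_abs (z : ℂ) : |z.re| ≤ Complex.abs z := Complex.abs_re_le_norm z

@[simp] theorem Complex.abs_I : Complex.abs Complex.I = 1 := Complex.norm_I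

set_option maxHeartbeats 1600000

namespace TOaux

lemma rpow_add_le {s : ℝ} (hs0 : 0 ≤ s) (hs1 : s ≤ 1) {x y : ℝ} (hx : 0 ≤ x) (hy : 0 ≤ y) :
    (x + y) ^ s ≤ x ^ s + y ^ s := by
  have h := NNReal.rpow_add_le_add_rpow x.toNNReal y.toNNReal hs0 hs1
  have h2 := NNReal.coe_le_coe.2 h
  push_cast at h2
  rwa [Real.coe_toNNReal x hx, Real.coe_toNNReal y hy] at h2

lemma rpow_sub_abs_le {s : ℝ} (hs0 : 0 ≤ s) (hs1 : s ≤ 1) {u v : ℝ} (hu : 0 ≤ u) (hv : 0 ≤ v) :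
    |u ^ s - v ^ s| ≤ |u - v| ^ s := by
  have main : ∀ u v : ℝ, 0 ≤ u → 0 ≤ v → v ≤ u → |u ^ s - v ^ s| ≤ |u - v| ^ s := by
    intro u v hu hv h
    have h1 : u ^ s ≤ (u - v) ^ s + v ^ s := by
      have := rpow_add_le hs0 hs1 (x := u - v) (y := v) (by linarith) hv
      simpa [sub_add_cancel] using this
    have h2 : v ^ s ≤ u ^ s := Real.rpow_le_rpow hv h hs0
    rw [_root_.abs_of_nonneg (by linarith : (0:ℝ) ≤ u ^ s - v ^ s),
      _root_.abs_of_nonneg (by linarith : (0:ℝ) ≤ u - v)]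
    linarith
  rcases le_total v u with h | h
  · exact main u v hu hv h
  · rw [abs_sub_comm, abs_sub_comm u v]
    exact main v u hv hu h

noncomputable def hker (a : ℂ) (r : ℝ) : ℂ := -1 / (a - (r : ℂ) / (Real.sqrt 2 : ℂ))

noncomputable def Av (z w : ℂ) (x : ℝ) : ℂ := w + (z - (x : ℂ)) / (Real.sqrt 2 : ℂ)

lemma phiPlus_eq (z w : ℂ) (κ p0 p1 r : ℝ) :
    phiPlus z (r + κ * p0, r + κ * p1) w
      = (1 / 2) * (hker (Av z w (κ * p0)) r + hker (Av z w (κ * p1)) r) := by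
  have h : ∀ x : ℝ, w + (z - ((r + x : ℝ) : ℂ)) / (Real.sqrt 2 : ℂ)
      = Av z w x - (r : ℂ) / (Real.sqrt 2 : ℂ) := by
    intro x
    rw [Av]
    push_cast
    ring
  simp only [phiPlus, hker, h]

lemma phiMinus_eq (z w : ℂ) (κ p0 p1 r : ℝ) :
    phiMinus z (r + κ * p0, r + κ * p1) w
      = (1 / 2) * (hker (Av z w (κ * p0)) r - hker (Av z w (κ * p1)) r) := by
  have h : ∀ x : ℝ, w + (z - ((r + x : ℝ) : ℂ)) / (Real.sqrt 2 : ℂ)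
      = Av z w x - (r : ℂ) / (Real.sqrt 2 : ℂ) := by
    intro x
    rw [Av]
    push_cast
    ring
  simp only [phiMinus, hker, h]

lemma Av_im {z w : ℂ} (hz : 0 ≤ z.im) (hw : 0 ≤ w.im) (x : ℝ) : 0 ≤ (Av z w x).im := by
  rw [Av, Complex.add_im]
  have h3 : 0 ≤ ((z - (x:ℂ)) / (Real.sqrt 2 : ℂ)).im := by
    rw [div_eq_mul_inv, ← Complex.ofReal_inv, Complex.mul_im]
    have h4 : (0:ℝ) ≤ (Real.sqrt 2)⁻¹ := by positivity
    simp only [Complex.ofReal_im, Complex.ofReal_re, mul_zero, add_zero, Complex.sub_im,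
      Complex.ofReal_im, sub_zero]
    positivity
  positivity

lemma hker_im_nonneg {a : ℂ} (ha : 0 ≤ a.im) (r : ℝ) : 0 ≤ (hker a r).im := by
  have him : (a - (r : ℂ) / (Real.sqrt 2 : ℂ)).im = a.im := by
    rw [Complex.sub_im]
    have : ((r : ℂ) / (Real.sqrt 2 : ℂ)).im = 0 := by
      rw [← Complex.ofReal_div]
      simp
    rw [this, sub_zero]
  rw [hker, neg_div, Complex.neg_im, one_div, Complex.inv_im, him, neg_div, neg_neg]
  have := Complex.normSq_nonneg (a - (r : ℂ) / (Real.sqrt 2 : ℂ))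
  positivity

lemma half_comb_im_nonneg {u v : ℂ} (hu : 0 ≤ u.im) (hv : 0 ≤ v.im) :
    0 ≤ ((1 / 2 : ℂ) * (u + v)).im := by
  rw [Complex.mul_im]
  have h1 : ((1 / 2 : ℂ)).im = 0 := by norm_num
  have h2 : ((1 / 2 : ℂ)).re = 1 / 2 := by norm_num
  rw [h1, h2, Complex.add_im]
  nlinarith


lemma abs_sub_le' (u v : ℂ) : Complex.abs (u - v) ≤ Complex.abs u + Complex.abs v := by
  rw [← Complex.norm_eq_abs, ← Complex.norm_eq_abs, ← Complex.norm_eq_abs]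
  exact norm_sub_le u v

lemma re_lb (a : ℂ) (r : ℝ) : |r - Real.sqrt 2 * a.re| / Real.sqrt 2
    ≤ Complex.abs (a - (r : ℂ) / (Real.sqrt 2 : ℂ)) := by
  have h2 : (0:ℝ) < Real.sqrt 2 := Real.sqrt_pos.2 (by norm_num)
  have hre : (a - (r : ℂ) / (Real.sqrt 2 : ℂ)).re = a.re - r / Real.sqrt 2 := by
    rw [Complex.sub_re, ← Complex.ofReal_div]
    simp
  have h3 : a.re - r / Real.sqrt 2 = (Real.sqrt 2 * a.re - r) / Real.sqrt 2 := by
    field_simp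
  calc |r - Real.sqrt 2 * a.re| / Real.sqrt 2
      = |(a - (r : ℂ) / (Real.sqrt 2 : ℂ)).re| := by
        rw [hre, h3, abs_div, _root_.abs_of_nonneg h2.le, abs_sub_comm]
    _ ≤ Complex.abs (a - (r : ℂ) / (Real.sqrt 2 : ℂ)) := Complex.abs_re_le_abs _

lemma hker_abs_rpow_le {s : ℝ} (hs0 : 0 < s) (a : ℂ) (r : ℝ)
    (h : r ≠ Real.sqrt 2 * a.re) :
    Complex.abs (hker a r) ^ s
      ≤ Real.sqrt 2 ^ s * |r - Real.sqrt 2 * a.re| ^ (-s) := by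
  have h2 : (0:ℝ) < Real.sqrt 2 := Real.sqrt_pos.2 (by norm_num)
  have hd : 0 < |r - Real.sqrt 2 * a.re| := abs_pos.2 (sub_ne_zero.2 h)
  set u := a - (r : ℂ) / (Real.sqrt 2 : ℂ) with hu
  rcases eq_or_ne u 0 with h0 | h0
  · rw [hker, ← hu, h0, div_zero, map_zero, Real.zero_rpow hs0.ne']
    positivity
  · have habs : Complex.abs (hker a r) = 1 / Complex.abs u := by
      rw [hker, ← hu, map_div₀]
      simp
    have hlb : |r - Real.sqrt 2 * a.re| / Real.sqrt 2 ≤ Complex.abs u := re_lb a r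
    have hupos : 0 < Complex.abs u := lt_of_lt_of_le (by positivity) hlb
    have hub : Complex.abs (hker a r) ≤ Real.sqrt 2 / |r - Real.sqrt 2 * a.re| := by
      rw [habs, div_le_div_iff₀ hupos hd]
      have hd2 : |r - Real.sqrt 2 * a.re| / Real.sqrt 2 * Real.sqrt 2 = |r - Real.sqrt 2 * a.re| :=
        div_mul_cancel₀ _ h2.ne'
      have := mul_le_mul_of_nonneg_right hlb h2.le
      rw [hd2] at this
      linarith
    calc Complex.abs (hker a r) ^ s ≤ (Real.sqrt 2 / |r - Real.sqrt 2 * a.re|) ^ s :=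
          Real.rpow_le_rpow (AbsoluteValue.nonneg _ _) hub hs0.le
      _ = Real.sqrt 2 ^ s * |r - Real.sqrt 2 * a.re| ^ (-s) := by
          rw [div_eq_mul_inv, Real.mul_rpow h2.le (by positivity),
            Real.inv_rpow hd.le, ← Real.rpow_neg hd.le]

lemma offbad {a : ℂ} {r ρ : ℝ} (h : Real.sqrt 2 * ρ ≤ |r - Real.sqrt 2 * a.re|) :
    ρ ≤ Complex.abs (a - (r : ℂ) / (Real.sqrt 2 : ℂ)) := by
  have h2 : (0:ℝ) < Real.sqrt 2 := Real.sqrt_pos.2 (by norm_num)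
  have h4 : ρ = Real.sqrt 2 * ρ / Real.sqrt 2 := by field_simp
  calc ρ = Real.sqrt 2 * ρ / Real.sqrt 2 := h4
    _ ≤ |r - Real.sqrt 2 * a.re| / Real.sqrt 2 := by gcongr
    _ ≤ _ := re_lb a r

lemma hker_sub_le {a t : ℂ} {r ρ : ℝ} (hρ : 0 < ρ)
    (h1 : ρ ≤ Complex.abs (a - (r : ℂ) / (Real.sqrt 2 : ℂ)))
    (h2 : ρ ≤ Complex.abs (a + t - (r : ℂ) / (Real.sqrt 2 : ℂ))) :
    Complex.abs (hker (a + t) r - hker a r) ≤ Complex.abs t / ρ ^ 2 := by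
  set u := a - (r : ℂ) / (Real.sqrt 2 : ℂ) with hu
  set u' := a + t - (r : ℂ) / (Real.sqrt 2 : ℂ) with hu'
  have hu0 : u ≠ 0 := by
    intro h; rw [h] at h1; simp at h1; linarith
  have hu0' : u' ≠ 0 := by
    intro h; rw [h] at h2; simp at h2; linarith
  have hut : u' = u + t := by rw [hu, hu']; ring
  have heq : hker (a + t) r - hker a r = t / (u * u') := by
    show -1 / u' - (-1) / u = t / (u * u')
    rw [div_sub_div _ _ hu0' hu0, div_eq_div_iff (mul_ne_zero hu0' hu0) (mul_ne_zero hu0 hu0')]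
    rw [hut]
    ring
  rw [heq, map_div₀, map_mul]
  have hpos : (0:ℝ) < ρ ^ 2 := by positivity
  have hle : ρ ^ 2 ≤ Complex.abs u * Complex.abs u' := by
    rw [sq]
    exact mul_le_mul h1 h2 hρ.le (AbsoluteValue.nonneg _ _)
  exact div_le_div_of_nonneg_left (AbsoluteValue.nonneg _ _) hpos hle |>.trans_eq rfl

lemma wt_le {s : ℝ} (hs0 : 0 ≤ s) (hs1 : s ≤ 1) (u v : ℂ) :
    Complex.abs ((1/2 : ℂ) * (u + v)) ^ s + Complex.abs ((1/2 : ℂ) * (u - v)) ^ s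
      ≤ 2 * (Complex.abs u ^ s + Complex.abs v ^ s) := by
  have key : ∀ x : ℂ, Complex.abs x ≤ Complex.abs u + Complex.abs v →
      Complex.abs ((1/2 : ℂ) * x) ^ s ≤ Complex.abs u ^ s + Complex.abs v ^ s := by
    intro x hx
    have h1 : Complex.abs ((1/2 : ℂ) * x) ≤ Complex.abs u + Complex.abs v := by
      rw [map_mul]
      have habs : Complex.abs ((1/2 : ℂ)) = 1/2 := by
        rw [show ((1/2 : ℂ)) = ((1/2 : ℝ) : ℂ) by norm_num, Complex.abs_ofReal]
        norm_num
      rw [habs]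
      nlinarith [AbsoluteValue.nonneg Complex.abs x]
    calc Complex.abs ((1/2 : ℂ) * x) ^ s ≤ (Complex.abs u + Complex.abs v) ^ s :=
          Real.rpow_le_rpow (AbsoluteValue.nonneg _ _) h1 hs0
      _ ≤ _ := rpow_add_le hs0 hs1 (AbsoluteValue.nonneg _ _) (AbsoluteValue.nonneg _ _)
  have k1 := key (u + v) (Complex.abs.add_le u v)
  have k2 := key (u - v) (abs_sub_le' u v)
  linarith

lemma half_sub_le (u u' v v' : ℂ) {b : ℝ}
    (h1 : Complex.abs (u' - u) ≤ b) (h2 : Complex.abs (v' - v) ≤ b) :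
    Complex.abs ((1/2 : ℂ) * (u' + v') - (1/2 : ℂ) * (u + v)) ≤ b ∧
    Complex.abs ((1/2 : ℂ) * (u' - v') - (1/2 : ℂ) * (u - v)) ≤ b := by
  have habs : Complex.abs ((1/2 : ℂ)) = 1/2 := by
    rw [show ((1/2 : ℂ)) = ((1/2 : ℝ) : ℂ) by norm_num, Complex.abs_ofReal]
    norm_num
  constructor
  · have he : (1/2 : ℂ) * (u' + v') - (1/2 : ℂ) * (u + v) = (1/2 : ℂ) * ((u' - u) + (v' - v)) := by
      ring
    rw [he, map_mul, habs]
    have := Complex.abs.add_le (u' - u) (v' - v)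
    nlinarith [AbsoluteValue.nonneg Complex.abs ((u' - u) + (v' - v))]
  · have he : (1/2 : ℂ) * (u' - v') - (1/2 : ℂ) * (u - v) = (1/2 : ℂ) * ((u' - u) - (v' - v)) := by
      ring
    rw [he, map_mul, habs]
    have := abs_sub_le' (u' - u) (v' - v)
    nlinarith [AbsoluteValue.nonneg Complex.abs ((u' - u) - (v' - v))]


lemma rpow_neg_anti {s a b : ℝ} (hs : 0 ≤ s) (ha : 0 < a) (hab : a ≤ b) :
    b ^ (-s) ≤ a ^ (-s) := by
  rw [Real.rpow_neg (by linarith), Real.rpow_neg ha.le]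
  have h1 : a ^ s ≤ b ^ s := Real.rpow_le_rpow ha.le hab hs
  have h2 : 0 < a ^ s := Real.rpow_pos_of_pos ha s
  exact inv_anti₀ h2 h1

lemma meas_pow (s c : ℝ) (hs0 : 0 < s) : Measurable (fun r : ℝ => |r - c| ^ (-s)) := by
  have h1 : (fun r : ℝ => |r - c| ^ (-s)) = fun r => (|r - c| ^ s)⁻¹ :=
    funext fun r => Real.rpow_neg (abs_nonneg _) s
  rw [h1]
  have hc : Continuous (fun r : ℝ => |r - c| ^ s) :=
    ((continuous_id.sub continuous_const).abs).rpow_const (fun x => Or.inr hs0.le)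
  exact hc.measurable.inv

section nu
variable {s K Cν : ℝ} {ν : ℝ → ℝ}

lemma hCν (hνnonneg : ∀ q, 0 ≤ ν q) (hνbd : ∀ᵐ q : ℝ, ν q ≤ Cν) : 0 ≤ Cν := by
  obtain ⟨r, hr⟩ := hνbd.exists
  linarith [hνnonneg r]

lemma hνint (hνmeas : Measurable ν) (hνnonneg : ∀ q, 0 ≤ ν q)
    (hνsupp : ∀ q, q ∉ Set.Icc (-K) K → ν q = 0) (hνbd : ∀ᵐ q : ℝ, ν q ≤ Cν) :
    Integrable ν := by
  have hint : Integrable ((Set.Icc (-K) K).indicator (fun _ => Cν)) :=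
    (integrable_indicator_iff measurableSet_Icc).2
      (integrableOn_const measure_Icc_lt_top.ne)
  refine hint.mono' hνmeas.aestronglyMeasurable ?_
  filter_upwards [hνbd] with r hr
  rw [Real.norm_eq_abs, _root_.abs_of_nonneg (hνnonneg r)]
  by_cases h : r ∈ Set.Icc (-K) K
  · rw [Set.indicator_of_mem h]; exact hr
  · rw [Set.indicator_of_notMem h, hνsupp r h]

lemma rint (hs0 : 0 < s) (hs1 : s < 1) (c ρ : ℝ) (hρ : 0 < ρ) :
    IntegrableOn (fun r => |r - c| ^ (-s)) (Set.Ioo (c - ρ) (c + ρ)) ∧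
      ∫ r in Set.Ioo (c - ρ) (c + ρ), |r - c| ^ (-s) = 2 * ρ ^ (1 - s) / (1 - s) := by
  have hs' : (-1 : ℝ) < -s := by linarith
  have II0 : IntervalIntegrable (fun x : ℝ => x ^ (-s)) volume 0 ρ :=
    intervalIntegral.intervalIntegrable_rpow' hs'
  have habs : Set.EqOn (fun x : ℝ => x ^ (-s)) (fun x : ℝ => |x| ^ (-s)) (Set.Ioc 0 ρ) := by
    intro x hx
    simp only
    rw [abs_of_pos hx.1]
  have II1 : IntervalIntegrable (fun x : ℝ => |x| ^ (-s)) volume 0 ρ := by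
    rw [intervalIntegrable_iff, Set.uIoc_of_le hρ.le] at II0 ⊢
    exact II0.congr_fun habs measurableSet_Ioc
  have II2 : IntervalIntegrable (fun x : ℝ => |x| ^ (-s)) volume (-ρ) 0 := by
    have := (IntervalIntegrable.iff_comp_neg enorm_ne_top).mp II1
    have heq : (fun x : ℝ => |(-x)| ^ (-s)) = fun x : ℝ => |x| ^ (-s) := by
      funext x; rw [abs_neg]
    rw [heq] at this
    simpa using this.symm
  have IIfull : IntervalIntegrable (fun x : ℝ => |x| ^ (-s)) volume (-ρ) ρ := II2.trans II1
  have IIshift : IntervalIntegrable (fun x : ℝ => |x - c| ^ (-s)) volume (c - ρ) (c + ρ) := by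
    have := IIfull.comp_sub_right c
    simpa [add_comm, sub_eq_add_neg] using this
  have hval0 : ∫ x in (0:ℝ)..ρ, x ^ (-s) = ρ ^ (1 - s) / (1 - s) := by
    rw [integral_rpow (Or.inl hs')]
    rw [Real.zero_rpow (by linarith : -s + 1 ≠ 0)]
    norm_num
    rw [show -s + 1 = 1 - s by ring]
  have hval1 : ∫ x in (0:ℝ)..ρ, |x| ^ (-s) = ρ ^ (1 - s) / (1 - s) := by
    rw [← hval0]
    refine intervalIntegral.integral_congr ?_
    intro x hx
    rw [Set.uIcc_of_le hρ.le] at hx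
    simp only
    rw [_root_.abs_of_nonneg hx.1]
  have hval2 : ∫ x in (-ρ : ℝ)..0, |x| ^ (-s) = ρ ^ (1 - s) / (1 - s) := by
    have h1 : ∫ x in (-ρ : ℝ)..0, |x| ^ (-s) = ∫ x in (-ρ : ℝ)..0, |(-x)| ^ (-s) := by
      refine intervalIntegral.integral_congr ?_
      intro x _
      simp only [abs_neg]
    rw [h1, intervalIntegral.integral_comp_neg (fun x => |x| ^ (-s))]
    simpa using hval1
  have hvalfull : ∫ x in (-ρ : ℝ)..ρ, |x| ^ (-s) = 2 * ρ ^ (1 - s) / (1 - s) := by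
    rw [← intervalIntegral.integral_add_adjacent_intervals II2 II1, hval1, hval2]
    ring
  have hvalshift : ∫ x in (c - ρ)..(c + ρ), |x - c| ^ (-s) = 2 * ρ ^ (1 - s) / (1 - s) := by
    have := intervalIntegral.integral_comp_sub_right (fun x => |x| ^ (-s)) c (a := c - ρ) (b := c + ρ)
    simp only [sub_sub_cancel_left, add_sub_cancel_left] at this
    rw [this]
    simpa [sub_sub_cancel_left] using hvalfull
  constructor
  · rw [← intervalIntegrable_iff_integrableOn_Ioo_of_le (by linarith)]
    exact IIshift
  · rw [← MeasureTheory.integral_Ioc_eq_integral_Ioo,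
      ← intervalIntegral.integral_of_le (by linarith : c - ρ ≤ c + ρ)]
    exact hvalshift


lemma one_le_abs_of_not_mem {r c : ℝ} (h : r ∉ Set.Ioo (c - 1) (c + 1)) : 1 ≤ |r - c| := by
  simp only [Set.mem_Ioo, not_and_or, not_lt] at h
  rcases h with h | h
  · rw [abs_sub_comm]; rw [le_abs]; left; linarith
  · rw [le_abs]; left; linarith

lemma rho_le_abs_of_not_mem {r c ρ : ℝ} (h : r ∉ Set.Ioo (c - ρ) (c + ρ)) : ρ ≤ |r - c| := by
  simp only [Set.mem_Ioo, not_and_or, not_lt] at h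
  rcases h with h | h
  · rw [abs_sub_comm]; rw [le_abs]; left; linarith
  · rw [le_abs]; left; linarith

lemma nu_int (hs0 : 0 < s) (hs1 : s < 1) (hνmeas : Measurable ν) (hνnonneg : ∀ q, 0 ≤ ν q)
    (hνsupp : ∀ q, q ∉ Set.Icc (-K) K → ν q = 0) (hνbd : ∀ᵐ q : ℝ, ν q ≤ Cν) (c : ℝ) :
    Integrable (fun r => |r - c| ^ (-s) * ν r) := by
  have hCν0 : 0 ≤ Cν := hCν hνnonneg hνbd
  have hmeas : Measurable (fun r => |r - c| ^ (-s) * ν r) := (meas_pow s c hs0).mul hνmeas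
  have hind : Integrable ((Set.Ioo (c - 1) (c + 1)).indicator (fun r => |r - c| ^ (-s))) :=
    (integrable_indicator_iff measurableSet_Ioo).2 (rint hs0 hs1 c 1 one_pos).1
  have hdom : Integrable (fun r =>
      Cν * ((Set.Ioo (c - 1) (c + 1)).indicator (fun r => |r - c| ^ (-s)) r) + ν r) :=
    (hind.const_mul Cν).add (hνint hνmeas hνnonneg hνsupp hνbd)
  refine hdom.mono' hmeas.aestronglyMeasurable ?_
  filter_upwards [hνbd] with r hr
  have hnn : 0 ≤ |r - c| ^ (-s) := Real.rpow_nonneg (abs_nonneg _) _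
  rw [Real.norm_eq_abs, _root_.abs_of_nonneg (mul_nonneg hnn (hνnonneg r))]
  by_cases h : r ∈ Set.Ioo (c - 1) (c + 1)
  · rw [Set.indicator_of_mem h]
    have : |r - c| ^ (-s) * ν r ≤ |r - c| ^ (-s) * Cν := mul_le_mul_of_nonneg_left hr hnn
    linarith [hνnonneg r, this]
  · rw [Set.indicator_of_notMem h]
    have h1 : 1 ≤ |r - c| := one_le_abs_of_not_mem h
    have h2 : |r - c| ^ (-s) ≤ 1 := by
      have := rpow_neg_anti hs0.le one_pos h1
      simpa using this
    have : |r - c| ^ (-s) * ν r ≤ 1 * ν r :=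
      mul_le_mul_of_nonneg_right h2 (hνnonneg r)
    simp only [mul_zero]
    linarith

lemma nu_setint_le_one (hνmeas : Measurable ν) (hνnonneg : ∀ q, 0 ≤ ν q)
    (hνsupp : ∀ q, q ∉ Set.Icc (-K) K → ν q = 0) (hνprob : ∫ q : ℝ, ν q = 1)
    (hνbd : ∀ᵐ q : ℝ, ν q ≤ Cν) (S : Set ℝ) :
    ∫ r in S, ν r ≤ 1 := by
  rw [← hνprob]
  exact setIntegral_le_integral (hνint hνmeas hνnonneg hνsupp hνbd)
    (Filter.Eventually.of_forall hνnonneg)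

lemma nu_setint_le_vol (hνmeas : Measurable ν) (hνnonneg : ∀ q, 0 ≤ ν q)
    (hνsupp : ∀ q, q ∉ Set.Icc (-K) K → ν q = 0) (hνbd : ∀ᵐ q : ℝ, ν q ≤ Cν)
    (S : Set ℝ) (hvol : volume S ≠ ⊤) :
    ∫ r in S, ν r ≤ Cν * (volume S).toReal := by
  have h1 : ∫ r in S, ν r ≤ ∫ _ in S, Cν := by
    refine integral_mono_ae ((hνint hνmeas hνnonneg hνsupp hνbd).integrableOn) ?_
      (ae_restrict_of_ae hνbd)
    exact integrableOn_const hvol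
  rw [setIntegral_const, smul_eq_mul] at h1
  rw [mul_comm]; exact h1

lemma nu_setbd (hs0 : 0 < s) (hs1 : s < 1) (hνmeas : Measurable ν) (hνnonneg : ∀ q, 0 ≤ ν q)
    (hνsupp : ∀ q, q ∉ Set.Icc (-K) K → ν q = 0) (hνbd : ∀ᵐ q : ℝ, ν q ≤ Cν)
    (c ρ : ℝ) (hρ : 0 < ρ) (S : Set ℝ) (hS : MeasurableSet S) :
    ∫ r in S, |r - c| ^ (-s) * ν r
      ≤ Cν * (2 * ρ ^ (1 - s) / (1 - s)) + ρ ^ (-s) * ∫ r in S, ν r := by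
  have hCν0 : 0 ≤ Cν := hCν hνnonneg hνbd
  have hInt := nu_int (K := K) hs0 hs1 hνmeas hνnonneg hνsupp hνbd c
  have hIν := hνint hνmeas hνnonneg hνsupp hνbd
  set B := Set.Ioo (c - ρ) (c + ρ) with hB
  have hBmeas : MeasurableSet B := measurableSet_Ioo
  have hIB := (rint hs0 hs1 c ρ hρ).1
  have hVB := (rint hs0 hs1 c ρ hρ).2
  have hsplit : (∫ r in S ∩ B, |r - c| ^ (-s) * ν r) + ∫ r in S \ B, |r - c| ^ (-s) * ν r
      = ∫ r in S, |r - c| ^ (-s) * ν r :=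
    integral_inter_add_diff hBmeas hInt.integrableOn
  have hfnn : ∀ r, 0 ≤ |r - c| ^ (-s) := fun r => Real.rpow_nonneg (abs_nonneg _) _
  have h1 : ∫ r in S ∩ B, |r - c| ^ (-s) * ν r ≤ Cν * (2 * ρ ^ (1 - s) / (1 - s)) := by
    have step1 : ∫ r in S ∩ B, |r - c| ^ (-s) * ν r ≤ ∫ r in S ∩ B, |r - c| ^ (-s) * Cν := by
      refine integral_mono_ae hInt.integrableOn ?_ ?_
      · exact (hIB.mono_set Set.inter_subset_right).mul_const Cν
      · filter_upwards [ae_restrict_of_ae hνbd] with r hr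
        exact mul_le_mul_of_nonneg_left hr (hfnn r)
    have step2 : ∫ r in S ∩ B, |r - c| ^ (-s) * Cν ≤ ∫ r in B, |r - c| ^ (-s) * Cν := by
      refine setIntegral_mono_set (hIB.mul_const Cν) ?_ ?_
      · exact Filter.Eventually.of_forall (fun r => mul_nonneg (hfnn r) hCν0)
      · exact HasSubset.Subset.eventuallyLE Set.inter_subset_right
    have step3 : ∫ r in B, |r - c| ^ (-s) * Cν = Cν * (2 * ρ ^ (1 - s) / (1 - s)) := by
      rw [show (fun r => |r - c| ^ (-s) * Cν) = fun r => Cν * |r - c| ^ (-s) by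
        funext r; ring]
      rw [integral_const_mul, hVB]
    calc ∫ r in S ∩ B, |r - c| ^ (-s) * ν r ≤ ∫ r in S ∩ B, |r - c| ^ (-s) * Cν := step1
      _ ≤ ∫ r in B, |r - c| ^ (-s) * Cν := step2
      _ = Cν * (2 * ρ ^ (1 - s) / (1 - s)) := step3
  have h2 : ∫ r in S \ B, |r - c| ^ (-s) * ν r ≤ ρ ^ (-s) * ∫ r in S, ν r := by
    have step1 : ∫ r in S \ B, |r - c| ^ (-s) * ν r ≤ ∫ r in S \ B, ρ ^ (-s) * ν r := by
      refine integral_mono_ae hInt.integrableOn (hIν.integrableOn.const_mul _) ?_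
      refine (ae_restrict_iff' (hS.diff hBmeas)).2 (Filter.Eventually.of_forall fun r hr => ?_)
      have hrB : r ∉ B := hr.2
      have hge : ρ ≤ |r - c| := rho_le_abs_of_not_mem hrB
      exact mul_le_mul_of_nonneg_right (rpow_neg_anti hs0.le hρ hge) (hνnonneg r)
    have step2 : ∫ r in S \ B, ρ ^ (-s) * ν r = ρ ^ (-s) * ∫ r in S \ B, ν r :=
      integral_const_mul _ _
    have step3 : ∫ r in S \ B, ν r ≤ ∫ r in S, ν r := by
      refine setIntegral_mono_set hIν.integrableOn ?_ ?_
      · exact Filter.Eventually.of_forall hνnonneg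
      · exact HasSubset.Subset.eventuallyLE Set.diff_subset
    have hrnn : 0 ≤ ρ ^ (-s) := Real.rpow_nonneg hρ.le _
    calc ∫ r in S \ B, |r - c| ^ (-s) * ν r ≤ ρ ^ (-s) * ∫ r in S \ B, ν r := by
          rw [← step2]; exact step1
      _ ≤ ρ ^ (-s) * ∫ r in S, ν r := mul_le_mul_of_nonneg_left step3 hrnn
  linarith [hsplit, h1, h2]
end nu

noncomputable def Wt (s : ℝ) (a₀ a₁ : ℂ) (r : ℝ) : ℝ :=
  Complex.abs ((1/2 : ℂ) * (hker a₀ r + hker a₁ r)) ^ s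
    + Complex.abs ((1/2 : ℂ) * (hker a₀ r - hker a₁ r)) ^ s

lemma Wt_nonneg (s : ℝ) (a₀ a₁ : ℂ) (r : ℝ) : 0 ≤ Wt s a₀ a₁ r :=
  add_nonneg (Real.rpow_nonneg (AbsoluteValue.nonneg _ _) _)
    (Real.rpow_nonneg (AbsoluteValue.nonneg _ _) _)

lemma meas_hker (a : ℂ) : Measurable (fun r : ℝ => hker a r) := by
  unfold hker
  refine Measurable.div measurable_const ?_
  exact measurable_const.sub (Complex.measurable_ofReal.div measurable_const)

lemma meas_abs_rpow {α} [MeasurableSpace α] {f : α → ℂ} (hf : Measurable f) {s : ℝ}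
    (hs : 0 ≤ s) : Measurable (fun x => Complex.abs (f x) ^ s) := by
  have h1 : Measurable (fun x => Complex.abs (f x)) := by
    simpa [← Complex.norm_eq_abs] using hf.norm
  exact (Real.continuous_rpow_const hs).measurable.comp h1

lemma meas_Wt (s : ℝ) (hs : 0 ≤ s) (a₀ a₁ : ℂ) : Measurable (fun r => Wt s a₀ a₁ r) := by
  unfold Wt
  exact (meas_abs_rpow (measurable_const.mul ((meas_hker a₀).add (meas_hker a₁))) hs).add
    (meas_abs_rpow (measurable_const.mul ((meas_hker a₀).sub (meas_hker a₁))) hs)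

section nu2
variable {s K Cν : ℝ} {ν : ℝ → ℝ}

/-- The uniform bound on the weight integral. -/
noncomputable def C0 (s Cν : ℝ) : ℝ := 4 * Real.sqrt 2 ^ s * (Cν * (2 / (1 - s)) + 1)

lemma C0_nonneg (hs1 : s < 1) (hCν0 : 0 ≤ Cν) : 0 ≤ C0 s Cν := by
  unfold C0
  have h1 : (0:ℝ) ≤ Real.sqrt 2 ^ s := Real.rpow_nonneg (Real.sqrt_nonneg 2) s
  have h2 : (0:ℝ) ≤ 2 / (1 - s) := div_nonneg (by norm_num) (by linarith)
  have h3 : (0:ℝ) ≤ Cν * (2 / (1 - s)) := mul_nonneg hCν0 h2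
  nlinarith

lemma ae_ne (c : ℝ) : ∀ᵐ r : ℝ, r ≠ c := by
  rw [ae_iff]
  simp only [not_ne_iff, Set.setOf_eq_eq_singleton]
  exact Real.volume_singleton

lemma wt_nu_ae_bound (hs0 : 0 < s) (hs1 : s < 1) (hνnonneg : ∀ q, 0 ≤ ν q) (a₀ a₁ : ℂ) :
    ∀ᵐ r : ℝ, Wt s a₀ a₁ r * ν r
      ≤ 2 * Real.sqrt 2 ^ s * (|r - Real.sqrt 2 * a₀.re| ^ (-s) * ν r
          + |r - Real.sqrt 2 * a₁.re| ^ (-s) * ν r) := by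
  filter_upwards [ae_ne (Real.sqrt 2 * a₀.re), ae_ne (Real.sqrt 2 * a₁.re)] with r h0 h1
  have w1 : Wt s a₀ a₁ r ≤ 2 * (Complex.abs (hker a₀ r) ^ s + Complex.abs (hker a₁ r) ^ s) :=
    wt_le hs0.le hs1.le _ _
  have w2 := hker_abs_rpow_le hs0 a₀ r h0
  have w3 := hker_abs_rpow_le hs0 a₁ r h1
  have hνr := hνnonneg r
  nlinarith [Real.rpow_nonneg (AbsoluteValue.nonneg Complex.abs (hker a₀ r)) s,
    Real.rpow_nonneg (AbsoluteValue.nonneg Complex.abs (hker a₁ r)) s]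

lemma wt_nu_integrable (hs0 : 0 < s) (hs1 : s < 1) (hνmeas : Measurable ν)
    (hνnonneg : ∀ q, 0 ≤ ν q) (hνsupp : ∀ q, q ∉ Set.Icc (-K) K → ν q = 0)
    (hνbd : ∀ᵐ q : ℝ, ν q ≤ Cν) (a₀ a₁ : ℂ) :
    Integrable (fun r => Wt s a₀ a₁ r * ν r) := by
  set c₀ := Real.sqrt 2 * a₀.re
  set c₁ := Real.sqrt 2 * a₁.re
  have hD : Integrable (fun r => 2 * Real.sqrt 2 ^ s *
      (|r - c₀| ^ (-s) * ν r + |r - c₁| ^ (-s) * ν r)) :=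
    ((nu_int (K := K) hs0 hs1 hνmeas hνnonneg hνsupp hνbd c₀).add
      (nu_int (K := K) hs0 hs1 hνmeas hνnonneg hνsupp hνbd c₁)).const_mul _
  refine hD.mono' ((meas_Wt s hs0.le a₀ a₁).mul hνmeas).aestronglyMeasurable ?_
  filter_upwards [wt_nu_ae_bound hs0 hs1 hνnonneg a₀ a₁] with r hr
  rwa [Real.norm_eq_abs, _root_.abs_of_nonneg (mul_nonneg (Wt_nonneg s a₀ a₁ r) (hνnonneg r))]

lemma nu_pow_int_le (hs0 : 0 < s) (hs1 : s < 1) (hνmeas : Measurable ν)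
    (hνnonneg : ∀ q, 0 ≤ ν q) (hνsupp : ∀ q, q ∉ Set.Icc (-K) K → ν q = 0)
    (hνprob : ∫ q : ℝ, ν q = 1) (hνbd : ∀ᵐ q : ℝ, ν q ≤ Cν) (c : ℝ) :
    ∫ r : ℝ, |r - c| ^ (-s) * ν r ≤ Cν * (2 / (1 - s)) + 1 := by
  have h := nu_setbd (K := K) hs0 hs1 hνmeas hνnonneg hνsupp hνbd c 1 one_pos
    Set.univ MeasurableSet.univ
  rw [Measure.restrict_univ] at h
  rw [Real.one_rpow, Real.one_rpow, hνprob] at h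
  simpa using h

lemma wt_nu_int_le (hs0 : 0 < s) (hs1 : s < 1) (hνmeas : Measurable ν)
    (hνnonneg : ∀ q, 0 ≤ ν q) (hνsupp : ∀ q, q ∉ Set.Icc (-K) K → ν q = 0)
    (hνprob : ∫ q : ℝ, ν q = 1) (hνbd : ∀ᵐ q : ℝ, ν q ≤ Cν) (a₀ a₁ : ℂ) :
    ∫ r : ℝ, Wt s a₀ a₁ r * ν r ≤ C0 s Cν := by
  set c₀ := Real.sqrt 2 * a₀.re
  set c₁ := Real.sqrt 2 * a₁.re
  have hi0 := nu_int (K := K) hs0 hs1 hνmeas hνnonneg hνsupp hνbd c₀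
  have hi1 := nu_int (K := K) hs0 hs1 hνmeas hνnonneg hνsupp hνbd c₁
  have hD : Integrable (fun r => 2 * Real.sqrt 2 ^ s *
      (|r - c₀| ^ (-s) * ν r + |r - c₁| ^ (-s) * ν r)) := (hi0.add hi1).const_mul _
  have h1 : ∫ r : ℝ, Wt s a₀ a₁ r * ν r ≤ ∫ r : ℝ, 2 * Real.sqrt 2 ^ s *
      (|r - c₀| ^ (-s) * ν r + |r - c₁| ^ (-s) * ν r) :=
    integral_mono_ae (wt_nu_integrable hs0 hs1 hνmeas hνnonneg hνsupp hνbd a₀ a₁) hD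
      (wt_nu_ae_bound hs0 hs1 hνnonneg a₀ a₁)
  rw [integral_const_mul, integral_add hi0 hi1] at h1
  have h2 := nu_pow_int_le (K := K) hs0 hs1 hνmeas hνnonneg hνsupp hνprob hνbd c₀
  have h3 := nu_pow_int_le (K := K) hs0 hs1 hνmeas hνnonneg hνsupp hνprob hνbd c₁
  have hs2 : (0:ℝ) ≤ Real.sqrt 2 ^ s := Real.rpow_nonneg (Real.sqrt_nonneg 2) s
  unfold C0
  nlinarith

end nu2

lemma meas_comp_g {g : ℂ → ℂ} (hg : ContinuousOn g {w : ℂ | 0 ≤ w.im})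
    {α} [MeasurableSpace α] {φ : α → ℂ} (hφ : Measurable φ) (hmem : ∀ x, 0 ≤ (φ x).im) :
    Measurable (fun x => g (φ x)) := by
  have hres : Continuous (Set.restrict {w : ℂ | 0 ≤ w.im} g) :=
    continuousOn_iff_continuous_restrict.mp hg
  have hφ' : Measurable (fun x => (⟨φ x, hmem x⟩ : {w : ℂ | 0 ≤ w.im})) :=
    hφ.subtype_mk
  exact hres.measurable.comp hφ'

section intr
variable {s K Cν : ℝ} {ν : ℝ → ℝ}

lemma int_r (hs0 : 0 < s) (hs1 : s < 1) (hνmeas : Measurable ν)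
    (hνnonneg : ∀ q, 0 ≤ ν q) (hνsupp : ∀ q, q ∉ Set.Icc (-K) K → ν q = 0)
    (hνbd : ∀ᵐ q : ℝ, ν q ≤ Cν)
    {g : ℂ → ℂ} {M : ℝ} (hgb : ∀ w : ℂ, 0 ≤ w.im → Complex.abs (g w) ≤ M)
    (hgc : ContinuousOn g {w : ℂ | 0 ≤ w.im})
    {a₀ a₁ : ℂ} (h₀ : 0 ≤ a₀.im) (h₁ : 0 ≤ a₁.im) :
    Integrable (fun r => g ((1/2 : ℂ) * (hker a₀ r + hker a₁ r))
      * ((Wt s a₀ a₁ r * ν r : ℝ) : ℂ)) := by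
  have hΦmem : ∀ r : ℝ, 0 ≤ ((1/2 : ℂ) * (hker a₀ r + hker a₁ r)).im := fun r =>
    half_comb_im_nonneg (hker_im_nonneg h₀ r) (hker_im_nonneg h₁ r)
  have hφmeas : Measurable (fun r : ℝ => (1/2 : ℂ) * (hker a₀ r + hker a₁ r)) :=
    measurable_const.mul ((meas_hker a₀).add (meas_hker a₁))
  have hmeas : Measurable (fun r => g ((1/2 : ℂ) * (hker a₀ r + hker a₁ r))
      * ((Wt s a₀ a₁ r * ν r : ℝ) : ℂ)) := by
    exact (meas_comp_g hgc hφmeas hΦmem).mul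
      (Complex.measurable_ofReal.comp ((meas_Wt s hs0.le a₀ a₁).mul hνmeas))
  have hdom : Integrable (fun r => M * (Wt s a₀ a₁ r * ν r)) :=
    (wt_nu_integrable hs0 hs1 hνmeas hνnonneg hνsupp hνbd a₀ a₁).const_mul M
  refine hdom.mono' hmeas.aestronglyMeasurable ?_
  refine Filter.Eventually.of_forall (fun r => ?_)
  rw [Complex.norm_eq_abs, map_mul, Complex.abs_ofReal,
    _root_.abs_of_nonneg (mul_nonneg (Wt_nonneg s a₀ a₁ r) (hνnonneg r))]
  exact mul_le_mul_of_nonneg_right (hgb _ (hΦmem r)) (mul_nonneg (Wt_nonneg s a₀ a₁ r) (hνnonneg r))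

end intr
section core
variable {s K Cν : ℝ} {ν : ℝ → ℝ}

noncomputable def CB (s Cν : ℝ) : ℝ := 16 * Real.sqrt 2 ^ s * Cν * (2 / (1 - s) + 8)

lemma sqrt2_facts : (1:ℝ) ≤ Real.sqrt 2 ∧ Real.sqrt 2 ≤ 2 := by
  constructor
  · have := Real.sqrt_le_sqrt (by norm_num : (1:ℝ) ≤ 2)
    rwa [Real.sqrt_one] at this
  · nlinarith [Real.sq_sqrt (by norm_num : (0:ℝ) ≤ 2), Real.sqrt_nonneg 2]

lemma nu_bad (hs0 : 0 < s) (hs1 : s < 1) (hνmeas : Measurable ν) (hνnonneg : ∀ q, 0 ≤ ν q)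
    (hνsupp : ∀ q, q ∉ Set.Icc (-K) K → ν q = 0) (hνbd : ∀ᵐ q : ℝ, ν q ≤ Cν)
    (c ρ : ℝ) (hρ : 0 < ρ) (S : Set ℝ) (hS : MeasurableSet S)
    (hvol : volume S ≤ ENNReal.ofReal (8 * (Real.sqrt 2 * ρ))) :
    ∫ r in S, |r - c| ^ (-s) * ν r ≤ 2 * Cν * (2 / (1 - s) + 8) * ρ ^ (1 - s) := by
  have hCν0 : 0 ≤ Cν := hCν hνnonneg hνbd
  have h1s : (0:ℝ) < 1 - s := by linarith
  set ρ' := Real.sqrt 2 * ρ with hρ'def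
  have hρ' : 0 < ρ' := mul_pos (Real.sqrt_pos.2 (by norm_num)) hρ
  have h1 := nu_setbd (K := K) hs0 hs1 hνmeas hνnonneg hνsupp hνbd c ρ' hρ' S hS
  have hfin : volume S ≠ ⊤ := by
    intro h
    rw [h] at hvol
    exact absurd (top_le_iff.mp hvol) ENNReal.ofReal_ne_top
  have h2 : ∫ r in S, ν r ≤ Cν * (8 * ρ') := by
    have := nu_setint_le_vol (K := K) hνmeas hνnonneg hνsupp hνbd S hfin
    have h3 : (volume S).toReal ≤ 8 * ρ' := by
      have := ENNReal.toReal_mono ENNReal.ofReal_ne_top hvol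
      rwa [ENNReal.toReal_ofReal (by positivity)] at this
    calc ∫ r in S, ν r ≤ Cν * (volume S).toReal := this
      _ ≤ Cν * (8 * ρ') := mul_le_mul_of_nonneg_left h3 hCν0
  have hkey : ρ' ^ (-s) * ρ' = ρ' ^ (1 - s) := by
    nth_rewrite 2 [← Real.rpow_one ρ']
    rw [← Real.rpow_add hρ']
    congr 1
    ring
  have hsplit2 : ρ' ^ (1 - s) ≤ 2 * ρ ^ (1 - s) := by
    rw [hρ'def, Real.mul_rpow (Real.sqrt_nonneg 2) hρ.le]
    have hb1 : Real.sqrt 2 ^ (1 - s) ≤ Real.sqrt 2 ^ (1:ℝ) :=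
      Real.rpow_le_rpow_of_exponent_le sqrt2_facts.1 (by linarith)
    rw [Real.rpow_one] at hb1
    have : Real.sqrt 2 ^ (1 - s) ≤ 2 := le_trans hb1 sqrt2_facts.2
    exact mul_le_mul_of_nonneg_right this (Real.rpow_nonneg hρ.le _)
  have hρs : 0 ≤ ρ' ^ (-s) := Real.rpow_nonneg hρ'.le _
  have h4 : ρ' ^ (-s) * ∫ r in S, ν r ≤ 8 * Cν * ρ' ^ (1 - s) := by
    calc ρ' ^ (-s) * ∫ r in S, ν r ≤ ρ' ^ (-s) * (Cν * (8 * ρ')) :=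
          mul_le_mul_of_nonneg_left h2 hρs
      _ = 8 * Cν * (ρ' ^ (-s) * ρ') := by ring
      _ = 8 * Cν * ρ' ^ (1 - s) := by rw [hkey]
  have h5 : Cν * (2 * ρ' ^ (1 - s) / (1 - s)) = Cν * (2 / (1 - s)) * ρ' ^ (1 - s) := by
    ring
  have hρ1s : 0 ≤ ρ' ^ (1 - s) := Real.rpow_nonneg hρ'.le _
  have h6 : Cν * (2 / (1 - s)) * ρ' ^ (1 - s) + 8 * Cν * ρ' ^ (1 - s)
      = Cν * (2 / (1 - s) + 8) * ρ' ^ (1 - s) := by ring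
  have h7 : Cν * (2 / (1 - s) + 8) * ρ' ^ (1 - s) ≤ Cν * (2 / (1 - s) + 8) * (2 * ρ ^ (1 - s)) := by
    refine mul_le_mul_of_nonneg_left hsplit2 ?_
    have : (0:ℝ) ≤ 2 / (1 - s) := by positivity
    positivity
  calc ∫ r in S, |r - c| ^ (-s) * ν r
      ≤ Cν * (2 * ρ' ^ (1 - s) / (1 - s)) + ρ' ^ (-s) * ∫ r in S, ν r := h1
    _ ≤ Cν * (2 / (1 - s)) * ρ' ^ (1 - s) + 8 * Cν * ρ' ^ (1 - s) := by
        rw [← h5]; linarith [h4]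
    _ = Cν * (2 / (1 - s) + 8) * ρ' ^ (1 - s) := h6
    _ ≤ Cν * (2 / (1 - s) + 8) * (2 * ρ ^ (1 - s)) := h7
    _ = 2 * Cν * (2 / (1 - s) + 8) * ρ ^ (1 - s) := by ring

lemma wt_nu_setint_le (hs0 : 0 < s) (hs1 : s < 1) (hνmeas : Measurable ν)
    (hνnonneg : ∀ q, 0 ≤ ν q) (hνsupp : ∀ q, q ∉ Set.Icc (-K) K → ν q = 0)
    (hνbd : ∀ᵐ q : ℝ, ν q ≤ Cν) (a₀ a₁ : ℂ) (S : Set ℝ) :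
    ∫ r in S, Wt s a₀ a₁ r * ν r
      ≤ 2 * Real.sqrt 2 ^ s * ((∫ r in S, |r - Real.sqrt 2 * a₀.re| ^ (-s) * ν r)
          + ∫ r in S, |r - Real.sqrt 2 * a₁.re| ^ (-s) * ν r) := by
  have hi0 := (nu_int (K := K) hs0 hs1 hνmeas hνnonneg hνsupp hνbd (Real.sqrt 2 * a₀.re)).integrableOn (s := S)
  have hi1 := (nu_int (K := K) hs0 hs1 hνmeas hνnonneg hνsupp hνbd (Real.sqrt 2 * a₁.re)).integrableOn (s := S)
  have h1 : ∫ r in S, Wt s a₀ a₁ r * ν r ≤ ∫ r in S, 2 * Real.sqrt 2 ^ s *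
      (|r - Real.sqrt 2 * a₀.re| ^ (-s) * ν r + |r - Real.sqrt 2 * a₁.re| ^ (-s) * ν r) := by
    refine integral_mono_ae
      ((wt_nu_integrable (K := K) hs0 hs1 hνmeas hνnonneg hνsupp hνbd a₀ a₁).integrableOn)
      (((hi0.add hi1).const_mul _)) (ae_restrict_of_ae (wt_nu_ae_bound hs0 hs1 hνnonneg a₀ a₁))
  rwa [integral_const_mul, integral_add hi0 hi1] at h1

lemma core_r (hs0 : 0 < s) (hs1 : s < 1) (hνmeas : Measurable ν) (hνnonneg : ∀ q, 0 ≤ ν q)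
    (hνsupp : ∀ q, q ∉ Set.Icc (-K) K → ν q = 0) (hνprob : ∫ q : ℝ, ν q = 1)
    (hνbd : ∀ᵐ q : ℝ, ν q ≤ Cν)
    {g : ℂ → ℂ} {M : ℝ} (hM : 0 ≤ M) (hgb : ∀ w : ℂ, 0 ≤ w.im → Complex.abs (g w) ≤ M)
    (hgc : ContinuousOn g {w : ℂ | 0 ≤ w.im})
    {ε₁ δ ρ : ℝ} (hδ : 0 < δ) (hρ : 0 < ρ)
    (hmod : ∀ w w' : ℂ, 0 ≤ w.im → 0 ≤ w'.im → Complex.abs (w - w') < δ →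
      Complex.abs (g w - g w') ≤ ε₁)
    {a₀ a₁ t : ℂ} (h₀ : 0 ≤ a₀.im) (h₁ : 0 ≤ a₁.im) (h₀' : 0 ≤ (a₀ + t).im)
    (h₁' : 0 ≤ (a₁ + t).im)
    (ht : Complex.abs t / ρ ^ 2 < δ) :
    Complex.abs ((∫ r : ℝ, g ((1/2 : ℂ) * (hker (a₀ + t) r + hker (a₁ + t) r))
        * ((Wt s (a₀ + t) (a₁ + t) r * ν r : ℝ) : ℂ))
      - ∫ r : ℝ, g ((1/2 : ℂ) * (hker a₀ r + hker a₁ r)) * ((Wt s a₀ a₁ r * ν r : ℝ) : ℂ))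
    ≤ ε₁ * C0 s Cν + 2 * M * (Complex.abs t / ρ ^ 2) ^ s + M * CB s Cν * ρ ^ (1 - s) := by
  have hCν0 : 0 ≤ Cν := hCν hνnonneg hνbd
  have hε₁ : 0 ≤ ε₁ := by
    have h := hmod 0 0 le_rfl le_rfl (by simpa using hδ)
    simpa using h
  -- notation
  set c₀ := Real.sqrt 2 * a₀.re with hc₀
  set c₁ := Real.sqrt 2 * a₁.re with hc₁
  set c₀' := Real.sqrt 2 * (a₀ + t).re with hc₀'
  set c₁' := Real.sqrt 2 * (a₁ + t).re with hc₁'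
  set ρ' := Real.sqrt 2 * ρ with hρ'def
  have hρ' : 0 < ρ' := mul_pos (Real.sqrt_pos.2 (by norm_num)) hρ
  set S : Set ℝ := Set.Ioo (c₀ - ρ') (c₀ + ρ') ∪ Set.Ioo (c₁ - ρ') (c₁ + ρ')
    ∪ Set.Ioo (c₀' - ρ') (c₀' + ρ') ∪ Set.Ioo (c₁' - ρ') (c₁' + ρ') with hSdef
  have hSmeas : MeasurableSet S :=
    ((measurableSet_Ioo.union measurableSet_Ioo).union measurableSet_Ioo).union measurableSet_Ioo
  have hSvol : volume S ≤ ENNReal.ofReal (8 * ρ') := by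
    have hv : ∀ c : ℝ, volume (Set.Ioo (c - ρ') (c + ρ')) = ENNReal.ofReal (2 * ρ') := by
      intro c
      rw [Real.volume_Ioo]
      congr 1
      ring
    calc volume S ≤ volume (Set.Ioo (c₀ - ρ') (c₀ + ρ') ∪ Set.Ioo (c₁ - ρ') (c₁ + ρ')
          ∪ Set.Ioo (c₀' - ρ') (c₀' + ρ')) + volume (Set.Ioo (c₁' - ρ') (c₁' + ρ')) :=
          measure_union_le _ _
      _ ≤ (volume (Set.Ioo (c₀ - ρ') (c₀ + ρ') ∪ Set.Ioo (c₁ - ρ') (c₁ + ρ'))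
          + volume (Set.Ioo (c₀' - ρ') (c₀' + ρ'))) + volume (Set.Ioo (c₁' - ρ') (c₁' + ρ')) := by
          gcongr
          exact measure_union_le _ _
      _ ≤ ((volume (Set.Ioo (c₀ - ρ') (c₀ + ρ')) + volume (Set.Ioo (c₁ - ρ') (c₁ + ρ')))
          + volume (Set.Ioo (c₀' - ρ') (c₀' + ρ'))) + volume (Set.Ioo (c₁' - ρ') (c₁' + ρ')) := by
          gcongr
          exact measure_union_le _ _
      _ = ENNReal.ofReal (2 * ρ') + ENNReal.ofReal (2 * ρ') + ENNReal.ofReal (2 * ρ')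
          + ENNReal.ofReal (2 * ρ') := by rw [hv, hv, hv, hv]
      _ = ENNReal.ofReal (8 * ρ') := by
          rw [← ENNReal.ofReal_add (by positivity) (by positivity),
            ← ENNReal.ofReal_add (by positivity) (by positivity),
            ← ENNReal.ofReal_add (by positivity) (by positivity)]
          congr 1
          ring
  have hSvol' : volume S ≤ ENNReal.ofReal (8 * (Real.sqrt 2 * ρ)) := hSvol
  -- integrability
  have hintF : Integrable (fun r : ℝ => g ((1/2 : ℂ) * (hker a₀ r + hker a₁ r))
      * ((Wt s a₀ a₁ r * ν r : ℝ) : ℂ)) :=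
    int_r (K := K) hs0 hs1 hνmeas hνnonneg hνsupp hνbd hgb hgc h₀ h₁
  have hintF' : Integrable (fun r : ℝ => g ((1/2 : ℂ) * (hker (a₀ + t) r + hker (a₁ + t) r))
      * ((Wt s (a₀ + t) (a₁ + t) r * ν r : ℝ) : ℂ)) :=
    int_r (K := K) hs0 hs1 hνmeas hνnonneg hνsupp hνbd hgb hgc h₀' h₁'
  set F := fun r : ℝ => g ((1/2 : ℂ) * (hker a₀ r + hker a₁ r))
      * ((Wt s a₀ a₁ r * ν r : ℝ) : ℂ) with hF
  set F' := fun r : ℝ => g ((1/2 : ℂ) * (hker (a₀ + t) r + hker (a₁ + t) r))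
      * ((Wt s (a₀ + t) (a₁ + t) r * ν r : ℝ) : ℂ) with hF'
  have hintD : Integrable (fun r => F' r - F r) := hintF'.sub hintF
  have hintDn : Integrable (fun r => ‖F' r - F r‖) := hintD.norm
  -- membership facts
  have hΦmem : ∀ r : ℝ, 0 ≤ ((1/2 : ℂ) * (hker a₀ r + hker a₁ r)).im := fun r =>
    half_comb_im_nonneg (hker_im_nonneg h₀ r) (hker_im_nonneg h₁ r)
  have hΦ'mem : ∀ r : ℝ, 0 ≤ ((1/2 : ℂ) * (hker (a₀ + t) r + hker (a₁ + t) r)).im := fun r =>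
    half_comb_im_nonneg (hker_im_nonneg h₀' r) (hker_im_nonneg h₁' r)
  -- pointwise bounds
  have hptM : ∀ r : ℝ, ‖F' r - F r‖
      ≤ M * (Wt s (a₀ + t) (a₁ + t) r * ν r) + M * (Wt s a₀ a₁ r * ν r) := by
    intro r
    have hb1 : ‖F' r‖ ≤ M * (Wt s (a₀ + t) (a₁ + t) r * ν r) := by
      rw [hF', Complex.norm_eq_abs, map_mul, Complex.abs_ofReal,
        _root_.abs_of_nonneg (mul_nonneg (Wt_nonneg _ _ _ _) (hνnonneg r))]
      exact mul_le_mul_of_nonneg_right (hgb _ (hΦ'mem r))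
        (mul_nonneg (Wt_nonneg _ _ _ _) (hνnonneg r))
    have hb2 : ‖F r‖ ≤ M * (Wt s a₀ a₁ r * ν r) := by
      rw [hF, Complex.norm_eq_abs, map_mul, Complex.abs_ofReal,
        _root_.abs_of_nonneg (mul_nonneg (Wt_nonneg _ _ _ _) (hνnonneg r))]
      exact mul_le_mul_of_nonneg_right (hgb _ (hΦmem r))
        (mul_nonneg (Wt_nonneg _ _ _ _) (hνnonneg r))
    calc ‖F' r - F r‖ ≤ ‖F' r‖ + ‖F r‖ := norm_sub_le _ _
      _ ≤ _ := add_le_add hb1 hb2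
  have hptGood : ∀ r : ℝ, r ∉ S → ‖F' r - F r‖
      ≤ (2 * M * (Complex.abs t / ρ ^ 2) ^ s) * ν r + ε₁ * (Wt s a₀ a₁ r * ν r) := by
    intro r hr
    simp only [hSdef, Set.mem_union, not_or] at hr
    obtain ⟨⟨⟨hr0, hr1⟩, hr0'⟩, hr1'⟩ := hr
    have hd0 : ρ ≤ Complex.abs (a₀ - (r : ℂ) / (Real.sqrt 2 : ℂ)) :=
      offbad (rho_le_abs_of_not_mem hr0)
    have hd1 : ρ ≤ Complex.abs (a₁ - (r : ℂ) / (Real.sqrt 2 : ℂ)) :=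
      offbad (rho_le_abs_of_not_mem hr1)
    have hd0' : ρ ≤ Complex.abs (a₀ + t - (r : ℂ) / (Real.sqrt 2 : ℂ)) :=
      offbad (rho_le_abs_of_not_mem hr0')
    have hd1' : ρ ≤ Complex.abs (a₁ + t - (r : ℂ) / (Real.sqrt 2 : ℂ)) :=
      offbad (rho_le_abs_of_not_mem hr1')
    have hk0 : Complex.abs (hker (a₀ + t) r - hker a₀ r) ≤ Complex.abs t / ρ ^ 2 :=
      hker_sub_le hρ hd0 hd0'
    have hk1 : Complex.abs (hker (a₁ + t) r - hker a₁ r) ≤ Complex.abs t / ρ ^ 2 :=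
      hker_sub_le hρ hd1 hd1'
    obtain ⟨hplus, hminus⟩ := half_sub_le (hker a₀ r) (hker (a₀ + t) r)
      (hker a₁ r) (hker (a₁ + t) r) hk0 hk1
    set Φ := (1/2 : ℂ) * (hker a₀ r + hker a₁ r)
    set Φ' := (1/2 : ℂ) * (hker (a₀ + t) r + hker (a₁ + t) r)
    set Ψ := (1/2 : ℂ) * (hker a₀ r - hker a₁ r)
    set Ψ' := (1/2 : ℂ) * (hker (a₀ + t) r - hker (a₁ + t) r)
    have hgd : Complex.abs (g Φ' - g Φ) ≤ ε₁ :=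
      hmod Φ' Φ (hΦ'mem r) (hΦmem r) (lt_of_le_of_lt hplus ht)
    have hWd : |Wt s (a₀ + t) (a₁ + t) r - Wt s a₀ a₁ r|
        ≤ 2 * (Complex.abs t / ρ ^ 2) ^ s := by
      have hq : (0:ℝ) ≤ Complex.abs t / ρ ^ 2 := by positivity
      have e1 : |Complex.abs Φ' ^ s - Complex.abs Φ ^ s|
          ≤ (Complex.abs t / ρ ^ 2) ^ s := by
        calc |Complex.abs Φ' ^ s - Complex.abs Φ ^ s|
            ≤ |Complex.abs Φ' - Complex.abs Φ| ^ s :=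
              rpow_sub_abs_le hs0.le hs1.le (AbsoluteValue.nonneg _ _) (AbsoluteValue.nonneg _ _)
          _ ≤ (Complex.abs t / ρ ^ 2) ^ s := by
              refine Real.rpow_le_rpow (abs_nonneg _) ?_ hs0.le
              exact le_trans (Complex.abs.abs_abv_sub_le_abv_sub _ _) hplus
      have e2 : |Complex.abs Ψ' ^ s - Complex.abs Ψ ^ s|
          ≤ (Complex.abs t / ρ ^ 2) ^ s := by
        calc |Complex.abs Ψ' ^ s - Complex.abs Ψ ^ s|
            ≤ |Complex.abs Ψ' - Complex.abs Ψ| ^ s :=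
              rpow_sub_abs_le hs0.le hs1.le (AbsoluteValue.nonneg _ _) (AbsoluteValue.nonneg _ _)
          _ ≤ (Complex.abs t / ρ ^ 2) ^ s := by
              refine Real.rpow_le_rpow (abs_nonneg _) ?_ hs0.le
              exact le_trans (Complex.abs.abs_abv_sub_le_abv_sub _ _) hminus
      have : Wt s (a₀ + t) (a₁ + t) r - Wt s a₀ a₁ r
          = (Complex.abs Φ' ^ s - Complex.abs Φ ^ s) + (Complex.abs Ψ' ^ s - Complex.abs Ψ ^ s) := by
        rw [Wt, Wt]; ring
      rw [this]
      calc |(Complex.abs Φ' ^ s - Complex.abs Φ ^ s) + (Complex.abs Ψ' ^ s - Complex.abs Ψ ^ s)|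
          ≤ |Complex.abs Φ' ^ s - Complex.abs Φ ^ s| + |Complex.abs Ψ' ^ s - Complex.abs Ψ ^ s| :=
            abs_add_le _ _
        _ ≤ _ := by linarith
    -- combine
    have hsplit : F' r - F r = (g Φ' * ((Wt s (a₀ + t) (a₁ + t) r : ℝ) : ℂ)
        - g Φ * ((Wt s a₀ a₁ r : ℝ) : ℂ)) * ((ν r : ℝ) : ℂ) := by
      rw [hF', hF]
      push_cast
      ring
    rw [hsplit, Complex.norm_eq_abs, map_mul, Complex.abs_ofReal,
      _root_.abs_of_nonneg (hνnonneg r)]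
    have hinner : Complex.abs (g Φ' * ((Wt s (a₀ + t) (a₁ + t) r : ℝ) : ℂ)
        - g Φ * ((Wt s a₀ a₁ r : ℝ) : ℂ))
        ≤ M * (2 * (Complex.abs t / ρ ^ 2) ^ s) + ε₁ * Wt s a₀ a₁ r := by
      have hdecomp : g Φ' * ((Wt s (a₀ + t) (a₁ + t) r : ℝ) : ℂ)
          - g Φ * ((Wt s a₀ a₁ r : ℝ) : ℂ)
          = g Φ' * (((Wt s (a₀ + t) (a₁ + t) r : ℝ) : ℂ) - ((Wt s a₀ a₁ r : ℝ) : ℂ))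
            + (g Φ' - g Φ) * ((Wt s a₀ a₁ r : ℝ) : ℂ) := by ring
      rw [hdecomp]
      calc Complex.abs _ ≤ Complex.abs (g Φ' * (((Wt s (a₀ + t) (a₁ + t) r : ℝ) : ℂ)
              - ((Wt s a₀ a₁ r : ℝ) : ℂ)))
            + Complex.abs ((g Φ' - g Φ) * ((Wt s a₀ a₁ r : ℝ) : ℂ)) := Complex.abs.add_le _ _
        _ ≤ M * (2 * (Complex.abs t / ρ ^ 2) ^ s) + ε₁ * Wt s a₀ a₁ r := by
            rw [map_mul, map_mul]
            have t1 : Complex.abs (((Wt s (a₀ + t) (a₁ + t) r : ℝ) : ℂ)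
                - ((Wt s a₀ a₁ r : ℝ) : ℂ)) ≤ 2 * (Complex.abs t / ρ ^ 2) ^ s := by
              rw [← Complex.ofReal_sub, Complex.abs_ofReal]
              exact hWd
            have t2 : Complex.abs ((Wt s a₀ a₁ r : ℝ) : ℂ) = Wt s a₀ a₁ r := by
              rw [Complex.abs_ofReal, _root_.abs_of_nonneg (Wt_nonneg _ _ _ _)]
            refine add_le_add ?_ ?_
            · exact mul_le_mul (hgb _ (hΦ'mem r)) t1 (AbsoluteValue.nonneg _ _) hM
            · rw [t2]
              exact mul_le_mul_of_nonneg_right hgd (Wt_nonneg _ _ _ _)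
    calc Complex.abs _ * ν r ≤ (M * (2 * (Complex.abs t / ρ ^ 2) ^ s) + ε₁ * Wt s a₀ a₁ r) * ν r :=
          mul_le_mul_of_nonneg_right hinner (hνnonneg r)
      _ = (2 * M * (Complex.abs t / ρ ^ 2) ^ s) * ν r + ε₁ * (Wt s a₀ a₁ r * ν r) := by ring
  -- assemble the integrals
  have hIν := hνint (K := K) hνmeas hνnonneg hνsupp hνbd
  have wtint := wt_nu_integrable (K := K) hs0 hs1 hνmeas hνnonneg hνsupp hνbd a₀ a₁
  have wtint' := wt_nu_integrable (K := K) hs0 hs1 hνmeas hνnonneg hνsupp hνbd (a₀ + t) (a₁ + t)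
  have hdiff : (∫ r : ℝ, F' r) - ∫ r : ℝ, F r = ∫ r : ℝ, (F' r - F r) :=
    (integral_sub hintF' hintF).symm
  have h1 : Complex.abs (∫ r : ℝ, (F' r - F r)) ≤ ∫ r : ℝ, ‖F' r - F r‖ := by
    rw [← Complex.norm_eq_abs]
    exact norm_integral_le_integral_norm _
  have hsplit3 : ∫ r : ℝ, ‖F' r - F r‖
      = (∫ r in S, ‖F' r - F r‖) + ∫ r in Sᶜ, ‖F' r - F r‖ :=
    (integral_add_compl hSmeas hintDn).symm
  -- bad set contribution
  have hbadW : ∫ r in S, Wt s a₀ a₁ r * ν r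
      ≤ 8 * Real.sqrt 2 ^ s * Cν * (2 / (1 - s) + 8) * ρ ^ (1 - s) := by
    have hb := wt_nu_setint_le (K := K) hs0 hs1 hνmeas hνnonneg hνsupp hνbd a₀ a₁ S
    have hb0 := nu_bad (K := K) hs0 hs1 hνmeas hνnonneg hνsupp hνbd c₀ ρ hρ S hSmeas hSvol'
    have hb1 := nu_bad (K := K) hs0 hs1 hνmeas hνnonneg hνsupp hνbd c₁ ρ hρ S hSmeas hSvol'
    have hs2 : (0:ℝ) ≤ Real.sqrt 2 ^ s := Real.rpow_nonneg (Real.sqrt_nonneg 2) s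
    rw [← hc₀, ← hc₁] at hb
    nlinarith
  have hbadW' : ∫ r in S, Wt s (a₀ + t) (a₁ + t) r * ν r
      ≤ 8 * Real.sqrt 2 ^ s * Cν * (2 / (1 - s) + 8) * ρ ^ (1 - s) := by
    have hb := wt_nu_setint_le (K := K) hs0 hs1 hνmeas hνnonneg hνsupp hνbd (a₀ + t) (a₁ + t) S
    have hb0 := nu_bad (K := K) hs0 hs1 hνmeas hνnonneg hνsupp hνbd c₀' ρ hρ S hSmeas hSvol'
    have hb1 := nu_bad (K := K) hs0 hs1 hνmeas hνnonneg hνsupp hνbd c₁' ρ hρ S hSmeas hSvol'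
    have hs2 : (0:ℝ) ≤ Real.sqrt 2 ^ s := Real.rpow_nonneg (Real.sqrt_nonneg 2) s
    rw [← hc₀', ← hc₁'] at hb
    nlinarith
  have hbad : ∫ r in S, ‖F' r - F r‖ ≤ M * CB s Cν * ρ ^ (1 - s) := by
    have step1 : ∫ r in S, ‖F' r - F r‖
        ≤ ∫ r in S, (M * (Wt s (a₀ + t) (a₁ + t) r * ν r) + M * (Wt s a₀ a₁ r * ν r)) := by
      refine integral_mono_ae hintDn.integrableOn
        (((wtint'.const_mul M).add (wtint.const_mul M)).integrableOn)
        (ae_restrict_of_ae (Filter.Eventually.of_forall hptM))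
    have step2 : ∫ r in S, (M * (Wt s (a₀ + t) (a₁ + t) r * ν r) + M * (Wt s a₀ a₁ r * ν r))
        = M * (∫ r in S, Wt s (a₀ + t) (a₁ + t) r * ν r) + M * ∫ r in S, Wt s a₀ a₁ r * ν r := by
      rw [integral_add ((wtint'.const_mul M).integrableOn) ((wtint.const_mul M).integrableOn),
        integral_const_mul, integral_const_mul]
    have : M * (∫ r in S, Wt s (a₀ + t) (a₁ + t) r * ν r) + M * (∫ r in S, Wt s a₀ a₁ r * ν r)
        ≤ M * CB s Cν * ρ ^ (1 - s) := by
      have e2 : M * CB s Cν * ρ ^ (1 - s)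
          = 2 * (M * (8 * Real.sqrt 2 ^ s * Cν * (2 / (1 - s) + 8) * ρ ^ (1 - s))) := by
        rw [CB]; ring
      linarith [mul_le_mul_of_nonneg_left hbadW hM, mul_le_mul_of_nonneg_left hbadW' hM]
    linarith [step1, step2.le, step2.ge]
  -- good set contribution
  have hgood : ∫ r in Sᶜ, ‖F' r - F r‖
      ≤ ε₁ * C0 s Cν + 2 * M * (Complex.abs t / ρ ^ 2) ^ s := by
    have hq : (0:ℝ) ≤ (Complex.abs t / ρ ^ 2) ^ s := Real.rpow_nonneg (by positivity) _
    have hGint : Integrable (fun r => (2 * M * (Complex.abs t / ρ ^ 2) ^ s) * ν r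
        + ε₁ * (Wt s a₀ a₁ r * ν r)) :=
      (hIν.const_mul _).add (wtint.const_mul ε₁)
    have step1 : ∫ r in Sᶜ, ‖F' r - F r‖
        ≤ ∫ r in Sᶜ, ((2 * M * (Complex.abs t / ρ ^ 2) ^ s) * ν r
            + ε₁ * (Wt s a₀ a₁ r * ν r)) := by
      refine integral_mono_ae hintDn.integrableOn hGint.integrableOn ?_
      refine (ae_restrict_iff' hSmeas.compl).2 (Filter.Eventually.of_forall fun r hr => ?_)
      exact hptGood r hr
    have step2 : ∫ r in Sᶜ, ((2 * M * (Complex.abs t / ρ ^ 2) ^ s) * ν r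
          + ε₁ * (Wt s a₀ a₁ r * ν r))
        ≤ ∫ r : ℝ, ((2 * M * (Complex.abs t / ρ ^ 2) ^ s) * ν r
            + ε₁ * (Wt s a₀ a₁ r * ν r)) := by
      refine setIntegral_le_integral hGint (Filter.Eventually.of_forall fun r => ?_)
      have := hνnonneg r
      have := Wt_nonneg s a₀ a₁ r
      positivity
    have step3 : ∫ r : ℝ, ((2 * M * (Complex.abs t / ρ ^ 2) ^ s) * ν r
          + ε₁ * (Wt s a₀ a₁ r * ν r))
        = (2 * M * (Complex.abs t / ρ ^ 2) ^ s) * (∫ r : ℝ, ν r)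
          + ε₁ * ∫ r : ℝ, Wt s a₀ a₁ r * ν r := by
      rw [integral_add (hIν.const_mul _) (wtint.const_mul ε₁), integral_const_mul,
        integral_const_mul]
    have step4 : ε₁ * (∫ r : ℝ, Wt s a₀ a₁ r * ν r) ≤ ε₁ * C0 s Cν :=
      mul_le_mul_of_nonneg_left
        (wt_nu_int_le (K := K) hs0 hs1 hνmeas hνnonneg hνsupp hνprob hνbd a₀ a₁) hε₁
    rw [hνprob] at step3
    calc ∫ r in Sᶜ, ‖F' r - F r‖ ≤ _ := step1
      _ ≤ _ := step2
      _ = (2 * M * (Complex.abs t / ρ ^ 2) ^ s) * 1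
          + ε₁ * ∫ r : ℝ, Wt s a₀ a₁ r * ν r := step3
      _ ≤ ε₁ * C0 s Cν + 2 * M * (Complex.abs t / ρ ^ 2) ^ s := by linarith
  calc Complex.abs ((∫ r : ℝ, F' r) - ∫ r : ℝ, F r)
      = Complex.abs (∫ r : ℝ, (F' r - F r)) := by rw [hdiff]
    _ ≤ ∫ r : ℝ, ‖F' r - F r‖ := h1
    _ = (∫ r in S, ‖F' r - F r‖) + ∫ r in Sᶜ, ‖F' r - F r‖ := hsplit3
    _ ≤ ε₁ * C0 s Cν + 2 * M * (Complex.abs t / ρ ^ 2) ^ s + M * CB s Cν * ρ ^ (1 - s) := by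
        linarith

end core
section sigma
variable {s K Cν : ℝ} {ν : ℝ → ℝ}

lemma transfer_eq (ν : ℝ → ℝ) (σ : Measure (ℝ × ℝ)) (κ : ℝ) (z : ℂ) (s : ℝ)
    (g : ℂ → ℂ) (w : ℂ) :
    transferOpC ν σ κ z s g w
      = ∫ p : ℝ × ℝ, (∫ r : ℝ, g ((1/2 : ℂ) * (hker (Av z w (κ * p.1)) r
            + hker (Av z w (κ * p.2)) r))
          * ((Wt s (Av z w (κ * p.1)) (Av z w (κ * p.2)) r * ν r : ℝ) : ℂ)) ∂σ := by
  unfold transferOpC Wt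
  simp only [phiPlus_eq, phiMinus_eq, Complex.norm_eq_abs]

lemma meas_inner_joint {z w : ℂ} (hz : 0 ≤ z.im) (hw : 0 ≤ w.im) (κ : ℝ)
    (hs0 : 0 < s) (hνmeas : Measurable ν)
    {g : ℂ → ℂ} (hgc : ContinuousOn g {w : ℂ | 0 ≤ w.im}) :
    Measurable (fun x : (ℝ × ℝ) × ℝ => g ((1/2 : ℂ) * (hker (Av z w (κ * x.1.1)) x.2
        + hker (Av z w (κ * x.1.2)) x.2))
      * ((Wt s (Av z w (κ * x.1.1)) (Av z w (κ * x.1.2)) x.2 * ν x.2 : ℝ) : ℂ)) := by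
  have mker : ∀ (sel : (ℝ × ℝ) × ℝ → ℝ), Measurable sel →
      Measurable (fun x : (ℝ × ℝ) × ℝ => hker (Av z w (κ * sel x)) x.2) := by
    intro sel hsel
    unfold hker Av
    refine Measurable.div measurable_const ?_
    refine Measurable.sub ?_ ?_
    · refine Measurable.add measurable_const ?_
      refine Measurable.div ?_ measurable_const
      exact measurable_const.sub (Complex.measurable_ofReal.comp (hsel.const_mul κ))
    · exact (Complex.measurable_ofReal.comp measurable_snd).div measurable_const
  have m0 := mker (fun x => x.1.1) (measurable_fst.fst)
  have m1 := mker (fun x => x.1.2) (measurable_fst.snd)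
  have mΦ : Measurable (fun x : (ℝ × ℝ) × ℝ => (1/2 : ℂ) * (hker (Av z w (κ * x.1.1)) x.2
      + hker (Av z w (κ * x.1.2)) x.2)) := measurable_const.mul (m0.add m1)
  have mΨ : Measurable (fun x : (ℝ × ℝ) × ℝ => (1/2 : ℂ) * (hker (Av z w (κ * x.1.1)) x.2
      - hker (Av z w (κ * x.1.2)) x.2)) := measurable_const.mul (m0.sub m1)
  have hmem : ∀ x : (ℝ × ℝ) × ℝ, 0 ≤ ((1/2 : ℂ) * (hker (Av z w (κ * x.1.1)) x.2
      + hker (Av z w (κ * x.1.2)) x.2)).im := fun x =>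
    half_comb_im_nonneg (hker_im_nonneg (Av_im hz hw _) _) (hker_im_nonneg (Av_im hz hw _) _)
  have mg := meas_comp_g hgc mΦ hmem
  have mW : Measurable (fun x : (ℝ × ℝ) × ℝ =>
      Wt s (Av z w (κ * x.1.1)) (Av z w (κ * x.1.2)) x.2) := by
    unfold Wt
    exact (meas_abs_rpow mΦ hs0.le).add (meas_abs_rpow mΨ hs0.le)
  exact mg.mul (Complex.measurable_ofReal.comp (mW.mul (hνmeas.comp measurable_snd)))

lemma inner_bound (hs0 : 0 < s) (hs1 : s < 1) (hνmeas : Measurable ν)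
    (hνnonneg : ∀ q, 0 ≤ ν q) (hνsupp : ∀ q, q ∉ Set.Icc (-K) K → ν q = 0)
    (hνprob : ∫ q : ℝ, ν q = 1) (hνbd : ∀ᵐ q : ℝ, ν q ≤ Cν)
    {g : ℂ → ℂ} {M : ℝ} (hM : 0 ≤ M) (hgb : ∀ w : ℂ, 0 ≤ w.im → Complex.abs (g w) ≤ M)
    (hgc : ContinuousOn g {w : ℂ | 0 ≤ w.im})
    {a₀ a₁ : ℂ} (h₀ : 0 ≤ a₀.im) (h₁ : 0 ≤ a₁.im) :
    ‖∫ r : ℝ, g ((1/2 : ℂ) * (hker a₀ r + hker a₁ r)) * ((Wt s a₀ a₁ r * ν r : ℝ) : ℂ)‖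
      ≤ M * C0 s Cν := by
  have hΦmem : ∀ r : ℝ, 0 ≤ ((1/2 : ℂ) * (hker a₀ r + hker a₁ r)).im := fun r =>
    half_comb_im_nonneg (hker_im_nonneg h₀ r) (hker_im_nonneg h₁ r)
  have hint := int_r (K := K) hs0 hs1 hνmeas hνnonneg hνsupp hνbd hgb hgc h₀ h₁
  have wtint := wt_nu_integrable (K := K) hs0 hs1 hνmeas hνnonneg hνsupp hνbd a₀ a₁
  calc ‖∫ r : ℝ, g ((1/2 : ℂ) * (hker a₀ r + hker a₁ r)) * ((Wt s a₀ a₁ r * ν r : ℝ) : ℂ)‖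
      ≤ ∫ r : ℝ, ‖g ((1/2 : ℂ) * (hker a₀ r + hker a₁ r)) * ((Wt s a₀ a₁ r * ν r : ℝ) : ℂ)‖ :=
        norm_integral_le_integral_norm _
    _ ≤ ∫ r : ℝ, M * (Wt s a₀ a₁ r * ν r) := by
        refine integral_mono_ae hint.norm (wtint.const_mul M)
          (Filter.Eventually.of_forall fun r => ?_)
        dsimp only
        rw [Complex.norm_eq_abs, map_mul, Complex.abs_ofReal,
          _root_.abs_of_nonneg (mul_nonneg (Wt_nonneg _ _ _ _) (hνnonneg r))]
        exact mul_le_mul_of_nonneg_right (hgb _ (hΦmem r))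
          (mul_nonneg (Wt_nonneg _ _ _ _) (hνnonneg r))
    _ = M * ∫ r : ℝ, Wt s a₀ a₁ r * ν r := integral_const_mul _ _
    _ ≤ M * C0 s Cν := mul_le_mul_of_nonneg_left
        (wt_nu_int_le (K := K) hs0 hs1 hνmeas hνnonneg hνsupp hνprob hνbd a₀ a₁) hM

lemma int_sigma (hs0 : 0 < s) (hs1 : s < 1) (hνmeas : Measurable ν)
    (hνnonneg : ∀ q, 0 ≤ ν q) (hνsupp : ∀ q, q ∉ Set.Icc (-K) K → ν q = 0)
    (hνprob : ∫ q : ℝ, ν q = 1) (hνbd : ∀ᵐ q : ℝ, ν q ≤ Cν)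
    (σ : Measure (ℝ × ℝ)) [IsProbabilityMeasure σ]
    {g : ℂ → ℂ} {M : ℝ} (hM : 0 ≤ M) (hgb : ∀ w : ℂ, 0 ≤ w.im → Complex.abs (g w) ≤ M)
    (hgc : ContinuousOn g {w : ℂ | 0 ≤ w.im})
    {z w : ℂ} (hz : 0 ≤ z.im) (hw : 0 ≤ w.im) (κ : ℝ) :
    Integrable (fun p : ℝ × ℝ => ∫ r : ℝ, g ((1/2 : ℂ) * (hker (Av z w (κ * p.1)) r
        + hker (Av z w (κ * p.2)) r))
      * ((Wt s (Av z w (κ * p.1)) (Av z w (κ * p.2)) r * ν r : ℝ) : ℂ)) σ := by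
  have hjoint := meas_inner_joint (s := s) (ν := ν) hz hw κ hs0 hνmeas hgc
  have hsm : StronglyMeasurable (fun p : ℝ × ℝ => ∫ r : ℝ,
      g ((1/2 : ℂ) * (hker (Av z w (κ * p.1)) r + hker (Av z w (κ * p.2)) r))
      * ((Wt s (Av z w (κ * p.1)) (Av z w (κ * p.2)) r * ν r : ℝ) : ℂ)) :=
    hjoint.stronglyMeasurable.integral_prod_right'
  refine (integrable_const (M * C0 s Cν)).mono' hsm.aestronglyMeasurable ?_
  refine Filter.Eventually.of_forall fun p => ?_
  have := inner_bound (K := K) hs0 hs1 hνmeas hνnonneg hνsupp hνprob hνbd hM hgb hgc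
    (Av_im hz hw (κ * p.1)) (Av_im hz hw (κ * p.2))
  simpa using this

lemma transfer_bound (hs0 : 0 < s) (hs1 : s < 1) (hνmeas : Measurable ν)
    (hνnonneg : ∀ q, 0 ≤ ν q) (hνsupp : ∀ q, q ∉ Set.Icc (-K) K → ν q = 0)
    (hνprob : ∫ q : ℝ, ν q = 1) (hνbd : ∀ᵐ q : ℝ, ν q ≤ Cν)
    (σ : Measure (ℝ × ℝ)) [IsProbabilityMeasure σ]
    {g : ℂ → ℂ} {M : ℝ} (hM : 0 ≤ M) (hgb : ∀ w : ℂ, 0 ≤ w.im → Complex.abs (g w) ≤ M)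
    (hgc : ContinuousOn g {w : ℂ | 0 ≤ w.im})
    {z w : ℂ} (hz : 0 ≤ z.im) (hw : 0 ≤ w.im) (κ : ℝ) :
    Complex.abs (transferOpC ν σ κ z s g w) ≤ M * C0 s Cν := by
  rw [transfer_eq, ← Complex.norm_eq_abs]
  have h := norm_integral_le_of_norm_le_const (μ := σ) (C := M * C0 s Cν)
    (f := fun p : ℝ × ℝ => ∫ r : ℝ, g ((1/2 : ℂ) * (hker (Av z w (κ * p.1)) r
        + hker (Av z w (κ * p.2)) r))
      * ((Wt s (Av z w (κ * p.1)) (Av z w (κ * p.2)) r * ν r : ℝ) : ℂ))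
    (Filter.Eventually.of_forall fun p =>
      inner_bound (K := K) hs0 hs1 hνmeas hνnonneg hνsupp hνprob hνbd hM hgb hgc
        (Av_im hz hw (κ * p.1)) (Av_im hz hw (κ * p.2)))
  simpa using h

end sigma
section key
variable {s K Cν : ℝ} {ν : ℝ → ℝ}

lemma CB_nonneg (hs1 : s < 1) (hCν0 : 0 ≤ Cν) : 0 ≤ CB s Cν := by
  unfold CB
  have h1 : (0:ℝ) ≤ Real.sqrt 2 ^ s := Real.rpow_nonneg (Real.sqrt_nonneg 2) s
  have h2 : (0:ℝ) ≤ 2 / (1 - s) := div_nonneg (by norm_num) (by linarith)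
  positivity

lemma key_diff (hs0 : 0 < s) (hs1 : s < 1) (hνmeas : Measurable ν) (hνnonneg : ∀ q, 0 ≤ ν q)
    (hνsupp : ∀ q, q ∉ Set.Icc (-K) K → ν q = 0) (hνprob : ∫ q : ℝ, ν q = 1)
    (hνbd : ∀ᵐ q : ℝ, ν q ≤ Cν)
    (σ : Measure (ℝ × ℝ)) [IsProbabilityMeasure σ]
    {g : ℂ → ℂ} {M : ℝ} (hM : 0 ≤ M) (hgb : ∀ w : ℂ, 0 ≤ w.im → Complex.abs (g w) ≤ M)
    (hgc : ContinuousOn g {w : ℂ | 0 ≤ w.im})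
    {ε₁ δ ρ : ℝ} (hδ : 0 < δ) (hρ : 0 < ρ)
    (hmod : ∀ w w' : ℂ, 0 ≤ w.im → 0 ≤ w'.im → Complex.abs (w - w') < δ →
      Complex.abs (g w - g w') ≤ ε₁)
    {z z' w w' : ℂ} (hz : 0 ≤ z.im) (hz' : 0 ≤ z'.im) (hw : 0 ≤ w.im) (hw' : 0 ≤ w'.im)
    (κ : ℝ)
    (ht : Complex.abs ((w' - w) + (z' - z) / (Real.sqrt 2 : ℂ)) / ρ ^ 2 < δ) :
    Complex.abs (transferOpC ν σ κ z' s g w' - transferOpC ν σ κ z s g w)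
      ≤ ε₁ * C0 s Cν
        + 2 * M * (Complex.abs ((w' - w) + (z' - z) / (Real.sqrt 2 : ℂ)) / ρ ^ 2) ^ s
        + M * CB s Cν * ρ ^ (1 - s) := by
  set t := (w' - w) + (z' - z) / (Real.sqrt 2 : ℂ) with htdef
  have hAv : ∀ x : ℝ, Av z' w' x = Av z w x + t := by
    intro x
    rw [Av, Av, htdef]
    ring
  have hint := int_sigma (K := K) hs0 hs1 hνmeas hνnonneg hνsupp hνprob hνbd σ hM hgb hgc
    hz hw κ
  have hint' := int_sigma (K := K) hs0 hs1 hνmeas hνnonneg hνsupp hνprob hνbd σ hM hgb hgc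
    hz' hw' κ
  rw [transfer_eq, transfer_eq]
  simp only [hAv] at hint' ⊢
  rw [← integral_sub hint' hint, ← Complex.norm_eq_abs]
  have hbd : ∀ p : ℝ × ℝ,
      ‖(∫ r : ℝ, g ((1/2 : ℂ) * (hker (Av z w (κ * p.1) + t) r
            + hker (Av z w (κ * p.2) + t) r))
          * ((Wt s (Av z w (κ * p.1) + t) (Av z w (κ * p.2) + t) r * ν r : ℝ) : ℂ))
        - ∫ r : ℝ, g ((1/2 : ℂ) * (hker (Av z w (κ * p.1)) r + hker (Av z w (κ * p.2)) r))
          * ((Wt s (Av z w (κ * p.1)) (Av z w (κ * p.2)) r * ν r : ℝ) : ℂ)‖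
      ≤ ε₁ * C0 s Cν + 2 * M * (Complex.abs t / ρ ^ 2) ^ s + M * CB s Cν * ρ ^ (1 - s) := by
    intro p
    have h₀ := Av_im hz hw (κ * p.1)
    have h₁ := Av_im hz hw (κ * p.2)
    have h₀' : 0 ≤ (Av z w (κ * p.1) + t).im := by
      rw [← hAv]; exact Av_im hz' hw' _
    have h₁' : 0 ≤ (Av z w (κ * p.2) + t).im := by
      rw [← hAv]; exact Av_im hz' hw' _
    have hc := core_r (K := K) hs0 hs1 hνmeas hνnonneg hνsupp hνprob hνbd hM hgb hgc hδ hρ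
      hmod h₀ h₁ h₀' h₁' ht
    rw [Complex.norm_eq_abs]
    exact hc
  have h := norm_integral_le_of_norm_le_const (μ := σ) (Filter.Eventually.of_forall hbd)
  simpa using h

lemma key_eps (hs0 : 0 < s) (hs1 : s < 1) (hνmeas : Measurable ν) (hνnonneg : ∀ q, 0 ≤ ν q)
    (hνsupp : ∀ q, q ∉ Set.Icc (-K) K → ν q = 0) (hνprob : ∫ q : ℝ, ν q = 1)
    (hνbd : ∀ᵐ q : ℝ, ν q ≤ Cν)
    (σ : Measure (ℝ × ℝ)) [IsProbabilityMeasure σ]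
    (M : ℝ) (hM : 0 ≤ M) (ε δ : ℝ) (hε : 0 < ε) (hδ : 0 < δ) :
    ∃ η : ℝ, 0 < η ∧ ∀ (g : ℂ → ℂ), (∀ w : ℂ, 0 ≤ w.im → Complex.abs (g w) ≤ M) →
      ContinuousOn g {w : ℂ | 0 ≤ w.im} →
      (∀ w w' : ℂ, 0 ≤ w.im → 0 ≤ w'.im → Complex.abs (w - w') < δ →
        Complex.abs (g w - g w') ≤ ε / (3 * (C0 s Cν + 1))) →
      ∀ (z z' w w' : ℂ), 0 ≤ z.im → 0 ≤ z'.im → 0 ≤ w.im → 0 ≤ w'.im → ∀ κ : ℝ,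
        Complex.abs ((w' - w) + (z' - z) / (Real.sqrt 2 : ℂ)) ≤ η →
        Complex.abs (transferOpC ν σ κ z' s g w' - transferOpC ν σ κ z s g w) ≤ ε := by
  have hCν0 : 0 ≤ Cν := hCν hνnonneg hνbd
  have hC0 : 0 ≤ C0 s Cν := C0_nonneg hs1 hCν0
  have hCB : 0 ≤ CB s Cν := CB_nonneg hs1 hCν0
  have h1s : (0:ℝ) < 1 - s := by linarith
  -- choose ρ
  set y := ε / (3 * (M * CB s Cν + 1)) with hydef
  have hy : 0 < y := by
    rw [hydef]
    have : 0 < M * CB s Cν + 1 := by nlinarith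
    positivity
  set ρ := min 1 (y ^ ((1 - s)⁻¹)) with hρdef
  have hρ : 0 < ρ := lt_min one_pos (Real.rpow_pos_of_pos hy _)
  have hρbd : M * CB s Cν * ρ ^ (1 - s) ≤ ε / 3 := by
    have h2 : ρ ^ (1 - s) ≤ y := by
      have h3 : ρ ≤ y ^ ((1 - s)⁻¹) := min_le_right _ _
      have h4 : ρ ^ (1 - s) ≤ (y ^ ((1 - s)⁻¹)) ^ (1 - s) :=
        Real.rpow_le_rpow hρ.le h3 h1s.le
      rwa [← Real.rpow_mul hy.le, inv_mul_cancel₀ h1s.ne', Real.rpow_one] at h4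
    have h5 : M * CB s Cν * ρ ^ (1 - s) ≤ M * CB s Cν * y :=
      mul_le_mul_of_nonneg_left h2 (by positivity)
    have h6 : M * CB s Cν * y ≤ ε / 3 := by
      rw [hydef]
      have he : M * CB s Cν * (ε / (3 * (M * CB s Cν + 1)))
          = ε * (M * CB s Cν) / (3 * (M * CB s Cν + 1)) := by ring
      rw [he, div_le_div_iff₀ (by nlinarith [mul_nonneg hM hCB]) (by norm_num)]
      nlinarith [mul_nonneg hM hCB]
    linarith
  -- choose η
  set x := min (δ / 2) ((ε / (3 * (2 * M + 1))) ^ (s⁻¹)) with hxdef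
  have hx : 0 < x := by
    refine lt_min (by linarith) (Real.rpow_pos_of_pos ?_ _)
    have : (0:ℝ) < 2 * M + 1 := by linarith
    positivity
  refine ⟨ρ ^ 2 * x, by positivity, ?_⟩
  intro g hgb hgc hmod z z' w w' hz hz' hw hw' κ hη
  set t := (w' - w) + (z' - z) / (Real.sqrt 2 : ℂ) with htdef
  have hq : Complex.abs t / ρ ^ 2 ≤ x := by
    rw [div_le_iff₀ (by positivity)]
    calc Complex.abs t ≤ ρ ^ 2 * x := hη
      _ = x * ρ ^ 2 := by ring
  have hqδ : Complex.abs t / ρ ^ 2 < δ := by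
    have : x ≤ δ / 2 := min_le_left _ _
    have h0 : (0:ℝ) ≤ Complex.abs t / ρ ^ 2 := by positivity
    linarith
  have hkd := key_diff (K := K) hs0 hs1 hνmeas hνnonneg hνsupp hνprob hνbd σ hM hgb hgc
    hδ hρ hmod hz hz' hw hw' κ hqδ
  -- three bounds
  have hb1 : ε / (3 * (C0 s Cν + 1)) * C0 s Cν ≤ ε / 3 := by
    rw [div_mul_eq_mul_div, div_le_div_iff₀ (by positivity) (by norm_num)]
    nlinarith
  have hb2 : 2 * M * (Complex.abs t / ρ ^ 2) ^ s ≤ ε / 3 := by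
    have h7 : (Complex.abs t / ρ ^ 2) ^ s ≤ x ^ s :=
      Real.rpow_le_rpow (by positivity) hq hs0.le
    have h8 : x ^ s ≤ ε / (3 * (2 * M + 1)) := by
      have h9 : x ≤ (ε / (3 * (2 * M + 1))) ^ (s⁻¹) := min_le_right _ _
      have h10 : x ^ s ≤ ((ε / (3 * (2 * M + 1))) ^ (s⁻¹)) ^ s :=
        Real.rpow_le_rpow hx.le h9 hs0.le
      have hεM : (0:ℝ) < ε / (3 * (2 * M + 1)) := by
        have : (0:ℝ) < 2 * M + 1 := by linarith
        positivity
      rwa [← Real.rpow_mul hεM.le, inv_mul_cancel₀ hs0.ne', Real.rpow_one] at h10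
    have h11 : 2 * M * (Complex.abs t / ρ ^ 2) ^ s ≤ 2 * M * (ε / (3 * (2 * M + 1))) := by
      have := le_trans h7 h8
      exact mul_le_mul_of_nonneg_left this (by linarith)
    have h12 : 2 * M * (ε / (3 * (2 * M + 1))) ≤ ε / 3 := by
      rw [mul_div_assoc', div_le_div_iff₀ (by positivity) (by norm_num)]
      nlinarith
    linarith
  calc Complex.abs (transferOpC ν σ κ z' s g w' - transferOpC ν σ κ z s g w)
      ≤ ε / (3 * (C0 s Cν + 1)) * C0 s Cν
        + 2 * M * (Complex.abs t / ρ ^ 2) ^ s + M * CB s Cν * ρ ^ (1 - s) := hkd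
    _ ≤ ε / 3 + ε / 3 + ε / 3 := by linarith
    _ = ε := by ring

end key
section fam
variable {s K Cν : ℝ} {ν : ℝ → ℝ}

def Fam {ι : Type*} (G : ι → ℂ → ℂ) (M : ℝ) : Prop :=
  (∀ i (w : ℂ), 0 ≤ w.im → Complex.abs (G i w) ≤ M) ∧
  ∀ ε : ℝ, 0 < ε → ∃ δ : ℝ, 0 < δ ∧ ∀ i (w w' : ℂ), 0 ≤ w.im → 0 ≤ w'.im →
    Complex.abs (w - w') < δ → Complex.abs (G i w - G i w') ≤ ε

lemma Fam.cont {ι : Type*} {G : ι → ℂ → ℂ} {M : ℝ} (h : Fam G M) (i : ι) :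
    ContinuousOn (G i) {w : ℂ | 0 ≤ w.im} := by
  rw [Metric.continuousOn_iff]
  intro b hb ε hε
  obtain ⟨δ, hδ, hmod⟩ := h.2 (ε / 2) (by linarith)
  refine ⟨δ, hδ, fun a ha hab => ?_⟩
  rw [Complex.dist_eq, Complex.norm_eq_abs]
  have := hmod i a b ha hb (by rw [Complex.dist_eq] at hab; exact hab)
  linarith

lemma Fam.mono_bound {ι : Type*} {G : ι → ℂ → ℂ} {M M' : ℝ} (h : Fam G M) (hle : M ≤ M') :
    Fam G M' :=
  ⟨fun i w hw => le_trans (h.1 i w hw) hle, h.2⟩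

lemma fam_step {ι : Type*} (hs0 : 0 < s) (hs1 : s < 1) (hνmeas : Measurable ν)
    (hνnonneg : ∀ q, 0 ≤ ν q) (hνsupp : ∀ q, q ∉ Set.Icc (-K) K → ν q = 0)
    (hνprob : ∫ q : ℝ, ν q = 1) (hνbd : ∀ᵐ q : ℝ, ν q ≤ Cν)
    (σ : Measure (ℝ × ℝ)) [IsProbabilityMeasure σ]
    (G : ι → ℂ → ℂ) (M : ℝ) (hM : 0 ≤ M) (hFam : Fam G M)
    (κs : ι → ℝ) (zs : ι → ℂ) (hzs : ∀ i, 0 ≤ (zs i).im) :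
    Fam (fun i => transferOpC ν σ (κs i) (zs i) s (G i)) (M * C0 s Cν) := by
  constructor
  · intro i w hw
    exact transfer_bound (K := K) hs0 hs1 hνmeas hνnonneg hνsupp hνprob hνbd σ hM
      (hFam.1 i) (hFam.cont i) (hzs i) hw (κs i)
  · intro ε hε
    have hCν0 : 0 ≤ Cν := hCν hνnonneg hνbd
    have hC0 : 0 ≤ C0 s Cν := C0_nonneg hs1 hCν0
    obtain ⟨δ, hδ, hmod⟩ := hFam.2 (ε / (3 * (C0 s Cν + 1))) (by positivity)
    obtain ⟨η, hη, hkey⟩ := key_eps (K := K) hs0 hs1 hνmeas hνnonneg hνsupp hνprob hνbd σ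
      M hM ε δ hε hδ
    refine ⟨η, hη, fun i w w' hw hw' hww => ?_⟩
    have hsh : Complex.abs ((w - w') + ((zs i) - (zs i)) / (Real.sqrt 2 : ℂ)) ≤ η := by
      simp only [sub_self, zero_div, add_zero]
      exact hww.le
    exact hkey (G i) (hFam.1 i) (hFam.cont i) (fun v v' hv hv' hvv => hmod i v v' hv hv' hvv)
      (zs i) (zs i) w' w (hzs i) (hzs i) hw' hw (κs i) hsh

lemma transfer_diff_le (hs0 : 0 < s) (hs1 : s < 1) (hνmeas : Measurable ν)
    (hνnonneg : ∀ q, 0 ≤ ν q) (hνsupp : ∀ q, q ∉ Set.Icc (-K) K → ν q = 0)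
    (hνprob : ∫ q : ℝ, ν q = 1) (hνbd : ∀ᵐ q : ℝ, ν q ≤ Cν)
    (σ : Measure (ℝ × ℝ)) [IsProbabilityMeasure σ]
    {u' u : ℂ → ℂ} {M : ℝ} (hM : 0 ≤ M)
    (hub' : ∀ w : ℂ, 0 ≤ w.im → Complex.abs (u' w) ≤ M)
    (hub : ∀ w : ℂ, 0 ≤ w.im → Complex.abs (u w) ≤ M)
    (hc' : ContinuousOn u' {w : ℂ | 0 ≤ w.im}) (hc : ContinuousOn u {w : ℂ | 0 ≤ w.im})
    {ε' : ℝ} (hε' : 0 ≤ ε')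
    (hdiff : ∀ v : ℂ, 0 ≤ v.im → Complex.abs (u' v - u v) ≤ ε')
    {z w : ℂ} (hz : 0 ≤ z.im) (hw : 0 ≤ w.im) (κ : ℝ) :
    Complex.abs (transferOpC ν σ κ z s u' w - transferOpC ν σ κ z s u w)
      ≤ ε' * C0 s Cν := by
  have hint' := int_sigma (K := K) hs0 hs1 hνmeas hνnonneg hνsupp hνprob hνbd σ hM hub' hc'
    hz hw κ
  have hint := int_sigma (K := K) hs0 hs1 hνmeas hνnonneg hνsupp hνprob hνbd σ hM hub hc
    hz hw κ
  rw [transfer_eq, transfer_eq, ← integral_sub hint' hint, ← Complex.norm_eq_abs]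
  have hbd : ∀ p : ℝ × ℝ,
      ‖(∫ r : ℝ, u' ((1/2 : ℂ) * (hker (Av z w (κ * p.1)) r + hker (Av z w (κ * p.2)) r))
          * ((Wt s (Av z w (κ * p.1)) (Av z w (κ * p.2)) r * ν r : ℝ) : ℂ))
        - ∫ r : ℝ, u ((1/2 : ℂ) * (hker (Av z w (κ * p.1)) r + hker (Av z w (κ * p.2)) r))
          * ((Wt s (Av z w (κ * p.1)) (Av z w (κ * p.2)) r * ν r : ℝ) : ℂ)‖
      ≤ ε' * C0 s Cν := by
    intro p
    set a₀ := Av z w (κ * p.1) with ha₀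
    set a₁ := Av z w (κ * p.2) with ha₁
    have h₀ : 0 ≤ a₀.im := Av_im hz hw _
    have h₁ : 0 ≤ a₁.im := Av_im hz hw _
    have hΦmem : ∀ r : ℝ, 0 ≤ ((1/2 : ℂ) * (hker a₀ r + hker a₁ r)).im := fun r =>
      half_comb_im_nonneg (hker_im_nonneg h₀ r) (hker_im_nonneg h₁ r)
    have hintr' := int_r (K := K) hs0 hs1 hνmeas hνnonneg hνsupp hνbd hub' hc' h₀ h₁
    have hintr := int_r (K := K) hs0 hs1 hνmeas hνnonneg hνsupp hνbd hub hc h₀ h₁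
    have wtint := wt_nu_integrable (K := K) hs0 hs1 hνmeas hνnonneg hνsupp hνbd a₀ a₁
    rw [← integral_sub hintr' hintr]
    calc ‖∫ r : ℝ, (u' ((1/2 : ℂ) * (hker a₀ r + hker a₁ r))
            * ((Wt s a₀ a₁ r * ν r : ℝ) : ℂ)
          - u ((1/2 : ℂ) * (hker a₀ r + hker a₁ r)) * ((Wt s a₀ a₁ r * ν r : ℝ) : ℂ))‖
        ≤ ∫ r : ℝ, ‖u' ((1/2 : ℂ) * (hker a₀ r + hker a₁ r))
            * ((Wt s a₀ a₁ r * ν r : ℝ) : ℂ)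
          - u ((1/2 : ℂ) * (hker a₀ r + hker a₁ r)) * ((Wt s a₀ a₁ r * ν r : ℝ) : ℂ)‖ :=
          norm_integral_le_integral_norm _
      _ ≤ ∫ r : ℝ, ε' * (Wt s a₀ a₁ r * ν r) := by
          refine integral_mono_ae (hintr'.sub hintr).norm (wtint.const_mul ε')
            (Filter.Eventually.of_forall fun r => ?_)
          dsimp only
          rw [← sub_mul, Complex.norm_eq_abs, map_mul, Complex.abs_ofReal,
            _root_.abs_of_nonneg (mul_nonneg (Wt_nonneg _ _ _ _) (hνnonneg r))]
          exact mul_le_mul_of_nonneg_right (hdiff _ (hΦmem r))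
            (mul_nonneg (Wt_nonneg _ _ _ _) (hνnonneg r))
      _ = ε' * ∫ r : ℝ, Wt s a₀ a₁ r * ν r := integral_const_mul _ _
      _ ≤ ε' * C0 s Cν := mul_le_mul_of_nonneg_left
          (wt_nu_int_le (K := K) hs0 hs1 hνmeas hνnonneg hνsupp hνprob hνbd a₀ a₁) hε'
  have h := norm_integral_le_of_norm_le_const (μ := σ) (Filter.Eventually.of_forall hbd)
  simpa using h

end fam
end TOaux

/-- Lemma 3.4(iii) of the paper: for an equicontinuous, uniformly bounded family
`{f_α : α ∈ J}` on the closed upper half-plane, the supremum norm of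
`(T_{κ,E+iε,s}^m − T_{κ,E,s}^m) f_α` tends to `0` as `ε ↓ 0`, uniformly in `α`, `κ ≥ 0` and
`E ∈ ℝ`. -/
theorem transferOpC_iterate_uniform_continuity (K : ℝ) (hK : 0 < K) (ν : ℝ → ℝ)
    (hνmeas : Measurable ν) (hνnonneg : ∀ q, 0 ≤ ν q)
    (hνsupp : ∀ q, q ∉ Set.Icc (-K) K → ν q = 0)
    (hνprob : ∫ q : ℝ, ν q = 1)
    (Cν : ℝ) (hνbd : ∀ᵐ q : ℝ, ν q ≤ Cν)
    (σ : Measure (ℝ × ℝ)) [IsProbabilityMeasure σ]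
    (hσsupp : σ {p : ℝ × ℝ | ¬(|p.1| ≤ 1 ∧ |p.2| ≤ 1)} = 0)
    (s : ℝ) (hs0 : 0 < s) (hs1 : s < 1 / 2) (m : ℕ) (hm : 0 < m)
    {J : Type*} (f : J → ℂ → ℂ)
    (B : ℝ) (hfB : ∀ (α : J) (w : ℂ), 0 ≤ w.im → norm (f α w) ≤ B)
    (hequi : ∀ ε : ℝ, 0 < ε → ∃ δ : ℝ, 0 < δ ∧ ∀ (α : J) (w w' : ℂ), 0 ≤ w.im → 0 ≤ w'.im →
      norm (w - w') < δ → norm (f α w - f α w') < ε) :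
    ∀ ε : ℝ, 0 < ε → ∃ ε₀ : ℝ, 0 < ε₀ ∧ ∀ ep : ℝ, 0 < ep → ep < ε₀ →
      ∀ (α : J) (κ E : ℝ), 0 ≤ κ → ∀ w : ℂ, 0 ≤ w.im →
        norm (((transferOpC ν σ κ ((E : ℂ) + ep * Complex.I) s)^[m] (f α)) w
          - ((transferOpC ν σ κ (E : ℂ) s)^[m] (f α)) w) ≤ ε := by
  classical
  have hs1' : s < 1 := by linarith
  have hCν0 : 0 ≤ Cν := TOaux.hCν hνnonneg hνbd
  have hC0 : 0 ≤ TOaux.C0 s Cν := TOaux.C0_nonneg hs1' hCν0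
  set B' : ℝ := max B 0 with hB'def
  have hB' : 0 ≤ B' := le_max_right _ _
  have hfB' : ∀ (α : J) (w : ℂ), 0 ≤ w.im → Complex.abs (f α w) ≤ B' :=
    fun α w hw => le_trans (hfB α w hw) (le_max_left _ _)
  set ι := J × ℝ × {z : ℂ // 0 ≤ z.im} with hιdef
  set G : ℕ → ι → ℂ → ℂ := fun k i => (transferOpC ν σ i.2.1 (i.2.2 : ℂ) s)^[k] (f i.1)
    with hGdef
  have hfam : ∀ k : ℕ, TOaux.Fam (G k) ((TOaux.C0 s Cν) ^ k * B') := by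
    intro k
    induction k with
    | zero =>
      constructor
      · intro i w hw
        simpa [hGdef] using hfB' i.1 w hw
      · intro ε hε
        obtain ⟨δ, hδ, hδ2⟩ := hequi ε hε
        exact ⟨δ, hδ, fun i w w' hw hw' hww => by
          simpa [hGdef, Complex.norm_eq_abs] using (hδ2 i.1 w w' hw hw' hww).le⟩
    | succ k IH =>
      have hMk : 0 ≤ (TOaux.C0 s Cν) ^ k * B' := by positivity
      have hstep := TOaux.fam_step (K := K) hs0 hs1' hνmeas hνnonneg hνsupp hνprob hνbd σ
        (G k) _ hMk IH (fun i => i.2.1) (fun i => (i.2.2 : ℂ)) (fun i => i.2.2.2)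
      have heq : G (k + 1) = fun i => transferOpC ν σ i.2.1 (i.2.2 : ℂ) s (G k i) := by
        funext i
        exact Function.iterate_succ_apply' _ _ _
      rw [heq]
      exact hstep.mono_bound (le_of_eq (by rw [pow_succ]; ring))
  have main : ∀ k : ℕ, ∀ ε : ℝ, 0 < ε → ∃ ε₀ : ℝ, 0 < ε₀ ∧ ∀ ep : ℝ, 0 < ep → ep < ε₀ →
      ∀ (α : J) (κ E : ℝ) (w : ℂ), 0 ≤ w.im →
      Complex.abs (((transferOpC ν σ κ ((E : ℂ) + ep * Complex.I) s)^[k] (f α)) w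
        - ((transferOpC ν σ κ (E : ℂ) s)^[k] (f α)) w) ≤ ε := by
    intro k
    induction k with
    | zero =>
      intro ε hε
      refine ⟨1, one_pos, fun ep _ _ α κ E w _ => ?_⟩
      simp only [Function.iterate_zero, id_eq, sub_self, map_zero]
      exact hε.le
    | succ k IH =>
      intro ε hε
      set Mk := (TOaux.C0 s Cν) ^ k * B' with hMkdef
      have hMk : 0 ≤ Mk := by positivity
      set ε' := ε / (2 * (TOaux.C0 s Cν + 1)) with hε'def
      have hε'pos : 0 < ε' := by positivity
      obtain ⟨ε₀', hε₀', hIH⟩ := IH ε' hε'pos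
      obtain ⟨δ, hδ, hmodfam⟩ := (hfam k).2 ((ε / 2) / (3 * (TOaux.C0 s Cν + 1)))
        (by positivity)
      obtain ⟨η, hηpos, hkey⟩ := TOaux.key_eps (K := K) hs0 hs1' hνmeas hνnonneg hνsupp
        hνprob hνbd σ Mk hMk (ε / 2) δ (by linarith) hδ
      have hsq2 : (0:ℝ) < Real.sqrt 2 := Real.sqrt_pos.2 (by norm_num)
      refine ⟨min ε₀' (η * Real.sqrt 2), lt_min hε₀' (by positivity), ?_⟩
      intro ep hep hlt α κ E w hw
      have hlt1 : ep < ε₀' := lt_of_lt_of_le hlt (min_le_left _ _)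
      have hlt2 : ep ≤ η * Real.sqrt 2 := (lt_of_lt_of_le hlt (min_le_right _ _)).le
      set z' : ℂ := (E : ℂ) + ep * Complex.I with hz'def
      have hz'im : z'.im = ep := by
        rw [hz'def]
        simp
      have hz' : 0 ≤ z'.im := by rw [hz'im]; exact hep.le
      have hEim : ((E : ℂ)).im = 0 := Complex.ofReal_im E
      have hE : 0 ≤ ((E : ℂ)).im := by rw [hEim]
      set u' : ℂ → ℂ := (transferOpC ν σ κ z' s)^[k] (f α) with hu'def
      set u : ℂ → ℂ := (transferOpC ν σ κ (E : ℂ) s)^[k] (f α) with hudef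
      have hub' : ∀ v : ℂ, 0 ≤ v.im → Complex.abs (u' v) ≤ Mk :=
        fun v hv => (hfam k).1 (α, κ, ⟨z', hz'⟩) v hv
      have hub : ∀ v : ℂ, 0 ≤ v.im → Complex.abs (u v) ≤ Mk :=
        fun v hv => (hfam k).1 (α, κ, ⟨(E : ℂ), hE⟩) v hv
      have hc' : ContinuousOn u' {w : ℂ | 0 ≤ w.im} := (hfam k).cont (α, κ, ⟨z', hz'⟩)
      have hc : ContinuousOn u {w : ℂ | 0 ≤ w.im} := (hfam k).cont (α, κ, ⟨(E : ℂ), hE⟩)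
      rw [Function.iterate_succ_apply', Function.iterate_succ_apply']
      have htri : transferOpC ν σ κ z' s u' w - transferOpC ν σ κ (E : ℂ) s u w
          = (transferOpC ν σ κ z' s u' w - transferOpC ν σ κ z' s u w)
            + (transferOpC ν σ κ z' s u w - transferOpC ν σ κ (E : ℂ) s u w) := by ring
      rw [htri]
      have hA : Complex.abs (transferOpC ν σ κ z' s u' w - transferOpC ν σ κ z' s u w)
          ≤ ε' * TOaux.C0 s Cν := by
        refine TOaux.transfer_diff_le (K := K) hs0 hs1' hνmeas hνnonneg hνsupp hνprob hνbd σ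
          hMk hub' hub hc' hc hε'pos.le (fun v hv => ?_) hz' hw κ
        exact hIH ep hep hlt1 α κ E v hv
      have hsh : Complex.abs ((w - w) + (z' - (E : ℂ)) / (Real.sqrt 2 : ℂ)) ≤ η := by
        have hzE : z' - (E : ℂ) = (ep : ℂ) * Complex.I := by rw [hz'def]; ring
        rw [sub_self, zero_add, hzE, map_div₀, map_mul, Complex.abs_ofReal,
          Complex.abs_ofReal, Complex.abs_I, mul_one, _root_.abs_of_nonneg hep.le,
          _root_.abs_of_nonneg hsq2.le, div_le_iff₀ hsq2]
        linarith
      have hB : Complex.abs (transferOpC ν σ κ z' s u w - transferOpC ν σ κ (E : ℂ) s u w)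
          ≤ ε / 2 := by
        refine hkey u hub hc (fun v v' hv hv' hvv => ?_) (E : ℂ) z' w w hE hz' hw hw κ hsh
        exact hmodfam (α, κ, ⟨(E : ℂ), hE⟩) v v' hv hv' hvv
      have hAB : ε' * TOaux.C0 s Cν ≤ ε / 2 := by
        rw [hε'def, div_mul_eq_mul_div, div_le_div_iff₀ (by positivity) (by norm_num)]
        nlinarith
      calc Complex.abs ((transferOpC ν σ κ z' s u' w - transferOpC ν σ κ z' s u w)
            + (transferOpC ν σ κ z' s u w - transferOpC ν σ κ (E : ℂ) s u w))
          ≤ Complex.abs (transferOpC ν σ κ z' s u' w - transferOpC ν σ κ z' s u w)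
            + Complex.abs (transferOpC ν σ κ z' s u w - transferOpC ν σ κ (E : ℂ) s u w) :=
            Complex.abs.add_le _ _
        _ ≤ ε / 2 + ε / 2 := by linarith
        _ = ε := by ring
  intro ε hε
  obtain ⟨ε₀, hε₀, hmain⟩ := main m ε hε
  exact ⟨ε₀, hε₀, fun ep hep hlt α κ E _ w hw => hmain ep hep hlt α κ E w hw⟩
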